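/- Let T ∈ (0,∞), p ∈ (1,∞), β ∈ (1/p, 1], let (θ^N)_{N∈ℕ} be partitions of [0,T] with limsup_{N→∞} d_max(θ^N) = 0, let (Ω,F,P) be a probability space, let (E,‖·‖_E) be a real Banach space, and let Y^N : [0,T]×Ω → E, N ∈ ℕ_0, be strongly measurable stochastic processes with continuous sample paths such that Y^0_0 ∈ L^p(P;E), |Y^0|_{C^β([0,T];L^p)} + sup_{N∈ℕ} [ (d_max(θ^N))^{−β} · sup_{t∈θ^N} ‖Y^0_t − Y^N_t‖_{L^p(P;E)} ] < ∞, and such that either sup_{N∈ℕ} |Y^N|_{C^β([0,T];L^p)} < ∞, or ( sup_{N∈ℕ} d_max(θ^N)/d_min(θ^N) < ∞ and for every N ∈ ℕ the process Y^N coincides with the piecewise affine linear interpolation [Y^N]_{θ^N} of its values at the nodes of θ^N ). Then for all α ∈ [0, β − 1/p) and ε ∈ (0,∞) it holds that sup_{N∈ℕ} [ ‖Y^N‖_{L^p(P;C^α([0,T],E))} + (d_max(θ^N))^{−(β−α−1/p−ε)} · ‖Y^0 − Y^N‖_{L^p(P;C^α([0,T],E))} ] < ∞. -/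

import Mathlib

open MeasureTheory ENNReal

/-- The Hölder seminorm (with exponent `r`) of `f` restricted to `[0,T]`,
with the supremum taken only over pairs whose distance lies in `A`. -/
noncomputable def holderSemiOnA {E : Type} [NormedAddCommGroup E]
    (T : ℝ) (A : Set ℝ) (r : ℝ) (f : ℝ → E) : ℝ≥0∞ :=
  ⨆ (s : ℝ) (t : ℝ) (_ : s ∈ Set.Icc (0:ℝ) T) (_ : t ∈ Set.Icc (0:ℝ) T)
    (_ : |s - t| ∈ A), (‖f s - f t‖₊ : ℝ≥0∞) / ENNReal.ofReal (|s - t| ^ r)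

/-- The Hölder seminorm (exponent `r`) of `f` on `[0,T]`. -/
noncomputable def holderSemiOn {E : Type} [NormedAddCommGroup E]
    (T : ℝ) (r : ℝ) (f : ℝ → E) : ℝ≥0∞ :=
  ⨆ (s : ℝ) (t : ℝ) (_ : s ∈ Set.Icc (0:ℝ) T) (_ : t ∈ Set.Icc (0:ℝ) T)
    (_ : s ≠ t), (‖f s - f t‖₊ : ℝ≥0∞) / ENNReal.ofReal (|s - t| ^ r)

/-- The supremum norm of `f` on `[0,T]`. -/
noncomputable def supNormOn {E : Type} [NormedAddCommGroup E]
    (T : ℝ) (f : ℝ → E) : ℝ≥0∞ :=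
  ⨆ (t : ℝ) (_ : t ∈ Set.Icc (0:ℝ) T), (‖f t‖₊ : ℝ≥0∞)

/-- The Hölder norm (exponent `r`) of `f` on `[0,T]`. -/
noncomputable def holderNormOn {E : Type} [NormedAddCommGroup E]
    (T : ℝ) (r : ℝ) (f : ℝ → E) : ℝ≥0∞ :=
  supNormOn T f + holderSemiOn T r f

/-- Hölder seminorm in time of a stochastic process, measured in `L^p(P;E)`. -/
noncomputable def lpHolderSemi {Ω E : Type} [MeasurableSpace Ω] [NormedAddCommGroup E]
    (P : Measure Ω) (T p r : ℝ) (X : ℝ → Ω → E) : ℝ≥0∞ :=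
  ⨆ (s : ℝ) (t : ℝ) (_ : s ∈ Set.Icc (0:ℝ) T) (_ : t ∈ Set.Icc (0:ℝ) T)
    (_ : s ≠ t),
    eLpNorm (fun ω => X s ω - X t ω) (ENNReal.ofReal p) P / ENNReal.ofReal (|s - t| ^ r)

/-- Supremum in time of the `L^p(P;E)`-norms of a stochastic process. -/
noncomputable def lpSupNorm {Ω E : Type} [MeasurableSpace Ω] [NormedAddCommGroup E]
    (P : Measure Ω) (T p : ℝ) (X : ℝ → Ω → E) : ℝ≥0∞ :=
  ⨆ (t : ℝ) (_ : t ∈ Set.Icc (0:ℝ) T), eLpNorm (X t) (ENNReal.ofReal p) P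

/-- Hölder norm in time of a stochastic process, measured in `L^p(P;E)`. -/
noncomputable def lpHolderNorm {Ω E : Type} [MeasurableSpace Ω] [NormedAddCommGroup E]
    (P : Measure Ω) (T p r : ℝ) (X : ℝ → Ω → E) : ℝ≥0∞ :=
  lpSupNorm P T p X + lpHolderSemi P T p r X

/-- The `L^p(P; C^r([0,T],E))`-norm of a stochastic process. -/
noncomputable def lpOfHolderNorm {Ω E : Type} [MeasurableSpace Ω] [NormedAddCommGroup E]
    (P : Measure Ω) (T p r : ℝ) (X : ℝ → Ω → E) : ℝ≥0∞ :=
  (∫⁻ ω, (holderNormOn T r (fun t => X t ω)) ^ p ∂P) ^ (1 / p)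

/-- Piecewise affine linear interpolation of `f` on the uniform grid
`{0, T/N, 2T/N, …, T}`. -/
noncomputable def uniformInterp {E : Type} [NormedAddCommGroup E] [NormedSpace ℝ E]
    (T : ℝ) (N : ℕ) (f : ℝ → E) : ℝ → E := fun t =>
  (((⌊t * N / T⌋ : ℝ) + 1) - t * N / T) • f (⌊t * N / T⌋ * T / N)
    + (t * N / T - (⌊t * N / T⌋ : ℝ)) • f ((⌊t * N / T⌋ + 1) * T / N)

/-- Maximal mesh size of the partition with nodes `θ 0 < θ 1 < … < θ K`. -/
noncomputable def dMax (K : ℕ) (θ : ℕ → ℝ) : ℝ := ⨆ j : Fin K, (θ (j + 1) - θ j)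

/-- Minimal mesh size of the partition with nodes `θ 0 < θ 1 < … < θ K`. -/
noncomputable def dMin (K : ℕ) (θ : ℕ → ℝ) : ℝ := ⨅ j : Fin K, (θ (j + 1) - θ j)

open Filter Topology

namespace CorH

variable {E : Type} [NormedAddCommGroup E]

noncomputable def Mdy (T : ℝ) (n : ℕ) (f : ℝ → E) : ℝ≥0∞ :=
  ⨆ k : Fin (2^n), (‖f (((k:ℕ)+1) * T / 2^n) - f ((k:ℕ) * T / 2^n)‖₊ : ℝ≥0∞)

noncomputable def Tail (T : ℝ) (n : ℕ) (f : ℝ → E) : ℝ≥0∞ := ∑' m : ℕ, Mdy T (n+m) f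

noncomputable def Sa (T a : ℝ) (f : ℝ → E) : ℝ≥0∞ :=
  ⨆ n : ℕ, ENNReal.ofReal (((2:ℝ)^n) ^ a) * Mdy T n f

noncomputable def dyap (T : ℝ) (n : ℕ) (u : ℝ) : ℝ := (⌊u * 2^n / T⌋ : ℝ) * T / 2^n

lemma dyap_mem {T : ℝ} (hT : 0 < T) {u : ℝ} (hu : u ∈ Set.Icc 0 T) (n : ℕ) :
    dyap T n u ∈ Set.Icc 0 u ∧ u - dyap T n u < T / 2^n := by
  have h2 : (0:ℝ) < 2^n := by positivity
  set x : ℝ := u * 2^n / T with hx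
  have hx0 : 0 ≤ x := by rw [hx]; have := hu.1; positivity
  have hfl : (0:ℝ) ≤ (⌊x⌋ : ℝ) := by exact_mod_cast Int.floor_nonneg.2 hx0
  have hxT' : u * 2^n = x * T := by rw [hx]; field_simp
  refine ⟨⟨by unfold dyap; positivity, ?_⟩, ?_⟩
  · unfold dyap
    rw [div_le_iff₀ h2]
    calc (⌊x⌋ : ℝ) * T ≤ x * T := mul_le_mul_of_nonneg_right (Int.floor_le _) hT.le
      _ = u * 2^n := hxT'.symm
  · unfold dyap
    have key : (u - (⌊x⌋:ℝ) * T / 2^n) = (u * 2^n - (⌊x⌋:ℝ)*T)/2^n := by field_simp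
    rw [key, div_lt_div_iff₀ h2 h2]
    have h1 : x - 1 < (⌊x⌋:ℝ) := Int.sub_one_lt_floor _
    nlinarith [mul_lt_mul_of_pos_right h1 hT, hxT', h2]

lemma dyap_step {T : ℝ} (hT : 0 < T) {u : ℝ} (hu : u ∈ Set.Icc 0 T) (f : ℝ → E) (n : ℕ) :
    (‖f (dyap T (n+1) u) - f (dyap T n u)‖₊ : ℝ≥0∞) ≤ Mdy T (n+1) f := by
  have h2 : (0:ℝ) < 2^n := by positivity
  set x : ℝ := u * 2^n / T with hx
  have hxx : u * 2^(n+1) / T = 2 * x := by rw [hx]; ring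
  have hx0 : (0:ℝ) ≤ x := by rw [hx]; have := hu.1; positivity
  have hfl0 : (0:ℤ) ≤ ⌊x⌋ := Int.floor_nonneg.2 hx0
  have hxT : x ≤ 2^n := by
    rw [hx, div_le_iff₀ hT]
    nlinarith [hu.2, h2]
  have hlow : 2 * ⌊x⌋ ≤ ⌊2*x⌋ := by
    apply Int.le_floor.2; push_cast
    nlinarith [Int.floor_le x]
  have hhigh : ⌊2*x⌋ ≤ 2 * ⌊x⌋ + 1 := by
    have h2x : (2:ℝ)*x < ((2 * ⌊x⌋ + 2 : ℤ) : ℝ) := by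
      push_cast; nlinarith [Int.lt_floor_add_one x]
    have h2' := Int.floor_lt.2 h2x
    omega
  have hub : ⌊2*x⌋ ≤ 2^(n+1) := by
    have hpow : (2:ℝ)^(n+1) = 2*2^n := by ring
    have h2x : (2:ℝ)*x ≤ ((2^(n+1) : ℤ) : ℝ) := by push_cast; rw [hpow]; linarith
    have hff := Int.floor_le_floor h2x
    rw [Int.floor_intCast] at hff
    exact hff
  rcases (by omega : ⌊2*x⌋ = 2 * ⌊x⌋ ∨ ⌊2*x⌋ = 2 * ⌊x⌋ + 1) with h | h
  · have heq : dyap T (n+1) u = dyap T n u := by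
      unfold dyap
      rw [hxx, h]
      push_cast
      field_simp
      ring
    rw [heq, sub_self]
    simp
  · set k : ℕ := (2 * ⌊x⌋).toNat with hkdef
    have hkZ : ((k:ℕ) : ℤ) = 2 * ⌊x⌋ := Int.toNat_of_nonneg (by omega)
    have hkR : ((k:ℕ) : ℝ) = 2 * ((⌊x⌋:ℤ) : ℝ) := by exact_mod_cast congrArg (fun z : ℤ => (z:ℝ)) hkZ
    have hcast : ((2^(n+1) : ℕ) : ℤ) = 2^(n+1) := by push_cast; ring
    have hklt : k < 2^(n+1) := by omega
    have e1 : dyap T (n+1) u = (((k:ℕ):ℝ)+1) * T / 2^(n+1) := by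
      unfold dyap
      rw [hxx, h, hkR]
      push_cast
      ring
    have e2 : dyap T n u = ((k:ℕ):ℝ) * T / 2^(n+1) := by
      unfold dyap
      rw [hkR]
      field_simp
      ring
    rw [e1, e2]
    exact le_iSup (fun j : Fin (2^(n+1)) =>
      ((‖f (((j:ℕ)+1) * T / 2^(n+1)) - f ((j:ℕ) * T / 2^(n+1))‖₊ : ℝ≥0∞))) ⟨k, hklt⟩

lemma dyap_tele {T : ℝ} (hT : 0 < T) {u : ℝ} (hu : u ∈ Set.Icc 0 T) (f : ℝ → E) (n M : ℕ) :
    (‖f (dyap T (n+M) u) - f (dyap T n u)‖₊ : ℝ≥0∞) ≤ Tail T (n+1) f := by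
  have key : ∀ M : ℕ, (‖f (dyap T (n+M) u) - f (dyap T n u)‖₊ : ℝ≥0∞)
      ≤ ∑ m ∈ Finset.range M, Mdy T (n+1+m) f := by
    intro M
    induction M with
    | zero => simp
    | succ M ih =>
      have tri : (‖f (dyap T (n+(M+1)) u) - f (dyap T n u)‖₊ : ℝ≥0∞)
          ≤ (‖f (dyap T (n+M+1) u) - f (dyap T (n+M) u)‖₊ : ℝ≥0∞)
            + (‖f (dyap T (n+M) u) - f (dyap T n u)‖₊ : ℝ≥0∞) := by
        rw [show n+(M+1) = n+M+1 by ring]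
        norm_cast
        simpa [← nndist_eq_nnnorm] using
          nndist_triangle (f (dyap T (n+M+1) u)) (f (dyap T (n+M) u)) (f (dyap T n u))
      refine tri.trans ?_
      rw [Finset.sum_range_succ]
      rw [add_comm ((∑ m ∈ Finset.range M, Mdy T (n+1+m) f)) _]
      refine add_le_add ?_ ih
      rw [show n + 1 + M = n + M + 1 by ring]
      exact dyap_step hT hu f (n+M)
  refine (key M).trans ?_
  unfold Tail
  exact ENNReal.sum_le_tsum (Finset.range M)

lemma dyap_approx {T : ℝ} (hT : 0 < T) {u : ℝ} (hu : u ∈ Set.Icc 0 T) {f : ℝ → E}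
    (hf : ContinuousOn f (Set.Icc 0 T)) (n : ℕ) :
    (‖f u - f (dyap T n u)‖₊ : ℝ≥0∞) ≤ Tail T (n+1) f := by
  have hmem : ∀ m : ℕ, dyap T m u ∈ Set.Icc (0:ℝ) T := by
    intro m
    have h := (dyap_mem hT hu m).1
    exact ⟨h.1, h.2.trans hu.2⟩
  have htend : Tendsto (fun M : ℕ => dyap T (n+M) u) atTop (𝓝 u) := by
    have hb : ∀ M : ℕ, ‖dyap T (n+M) u - u‖ ≤ T / 2^(n+M) := by
      intro M
      have h1 := (dyap_mem hT hu (n+M)).1.2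
      have h2 := (dyap_mem hT hu (n+M)).2
      have h3 : (0:ℝ) < T / 2^(n+M) := by positivity
      rw [Real.norm_eq_abs, abs_le]
      constructor <;> linarith
    have hT2 : Tendsto (fun M : ℕ => T / 2^(n+M)) atTop (𝓝 0) := by
      have hgeo : Tendsto (fun M : ℕ => ((1:ℝ)/2)^M) atTop (𝓝 0) :=
        _root_.tendsto_pow_atTop_nhds_zero_of_lt_one (by norm_num) (by norm_num)
      have h1 : Tendsto (fun M : ℕ => T * ((1:ℝ)/2)^n * ((1:ℝ)/2)^M) atTop (𝓝 0) := by
        simpa using hgeo.const_mul (T * ((1:ℝ)/2)^n)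
      refine h1.congr (fun M => ?_)
      rw [pow_add]
      field_simp
      have h2 : ((1:ℝ)/2)^n * 2^n = 1 := by rw [← mul_pow]; norm_num
      have h3 : ((1:ℝ)/2)^M * 2^M = 1 := by rw [← mul_pow]; norm_num
      linear_combination ((1:ℝ)/2)^M * 2^M * h2 + h3
    have h' : Tendsto (fun M : ℕ => dyap T (n+M) u - u) atTop (𝓝 0) :=
      squeeze_zero_norm hb hT2
    have h'' : Tendsto (fun M : ℕ => (dyap T (n+M) u - u) + u) atTop (𝓝 (0 + u)) :=
      h'.add tendsto_const_nhds
    simpa using h''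
  have hftend : Tendsto (fun M : ℕ => f (dyap T (n+M) u)) atTop (𝓝 (f u)) := by
    have hcw : ContinuousWithinAt f (Set.Icc 0 T) u := hf u hu
    apply hcw.tendsto.comp
    apply tendsto_nhdsWithin_of_tendsto_nhds_of_eventually_within _ htend
    exact Filter.Eventually.of_forall (fun M => hmem (n+M))
  have hnorm : Tendsto (fun M : ℕ => (‖f (dyap T (n+M) u) - f (dyap T n u)‖₊ : ℝ≥0∞))
      atTop (𝓝 ((‖f u - f (dyap T n u)‖₊ : ℝ≥0∞))) := by
    apply (ENNReal.continuous_coe.tendsto _).comp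
    exact (continuous_nnnorm.tendsto _).comp (hftend.sub tendsto_const_nhds)
  exact le_of_tendsto hnorm (Filter.Eventually.of_forall (fun M => dyap_tele hT hu f n M))

end CorH

namespace CorH

variable {E : Type} [NormedAddCommGroup E]

lemma Mdy_le_Tail (T : ℝ) (f : ℝ → E) (n : ℕ) : Mdy T n f ≤ Tail T n f := by
  have h := ENNReal.le_tsum (f := fun m : ℕ => Mdy T (n+m) f) 0
  simpa [Tail] using h

lemma Tail_succ_le (T : ℝ) (f : ℝ → E) (n : ℕ) : Tail T (n+1) f ≤ Tail T n f := by
  unfold Tail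
  refine Summable.tsum_le_tsum_of_inj (fun m => m+1) (fun a b h => by exact Nat.succ_injective h) (fun c _ => zero_le)
    (fun m => le_of_eq (by rw [show n+1+m = n+(m+1) by ring])) ENNReal.summable ENNReal.summable

lemma dyap_pair {T : ℝ} (hT : 0 < T) {s t : ℝ} (hs : s ∈ Set.Icc 0 T) (ht : t ∈ Set.Icc 0 T)
    (hst : s ≤ t) (f : ℝ → E) {n : ℕ} (hd : t - s ≤ T / 2^n) :
    (‖f (dyap T n t) - f (dyap T n s)‖₊ : ℝ≥0∞) ≤ Mdy T n f := by
  have h2 : (0:ℝ) < 2^n := by positivity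
  set x : ℝ := s * 2^n / T with hx
  set y : ℝ := t * 2^n / T with hy
  have hx0 : (0:ℝ) ≤ x := by rw [hx]; have := hs.1; positivity
  have hd' : (t - s) * 2^n ≤ T := by
    rw [le_div_iff₀ h2] at hd; exact hd
  have hmono : ⌊x⌋ ≤ ⌊y⌋ := Int.floor_le_floor (by
    rw [hx, hy, div_le_div_iff₀ hT hT]
    nlinarith [mul_le_mul_of_nonneg_right (mul_le_mul_of_nonneg_right hst h2.le) hT.le])
  have hyx : y ≤ x + 1 := by
    rw [hx, hy]
    rw [div_add' _ _ _ hT.ne']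
    rw [div_le_div_iff₀ hT hT]
    nlinarith [hd', hT]
  have hup : ⌊y⌋ ≤ ⌊x⌋ + 1 := by
    have : ⌊y⌋ ≤ ⌊x + 1⌋ := Int.floor_le_floor hyx
    rwa [Int.floor_add_one] at this
  have hfl0 : (0:ℤ) ≤ ⌊x⌋ := Int.floor_nonneg.2 hx0
  have hyT : y ≤ 2^n := by
    rw [hy, div_le_iff₀ hT]
    nlinarith [ht.2, h2]
  have hyub : ⌊y⌋ ≤ 2^n := by
    have h2x : y ≤ ((2^n : ℤ) : ℝ) := by push_cast; linarith
    have hff := Int.floor_le_floor h2x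
    rw [Int.floor_intCast] at hff
    exact hff
  rcases (by omega : ⌊y⌋ = ⌊x⌋ ∨ ⌊y⌋ = ⌊x⌋ + 1) with h | h
  · have heq : dyap T n t = dyap T n s := by unfold dyap; rw [← hx, ← hy, h]
    rw [heq, sub_self]; simp
  · set k : ℕ := ⌊x⌋.toNat with hkdef
    have hkZ : ((k:ℕ) : ℤ) = ⌊x⌋ := Int.toNat_of_nonneg hfl0
    have hkR : ((k:ℕ) : ℝ) = ((⌊x⌋:ℤ) : ℝ) := by exact_mod_cast congrArg (fun z : ℤ => (z:ℝ)) hkZ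
    have hcast : ((2^n : ℕ) : ℤ) = 2^n := by push_cast; ring
    have hklt : k < 2^n := by omega
    have e1 : dyap T n t = (((k:ℕ):ℝ)+1) * T / 2^n := by
      unfold dyap; rw [← hy, h]; push_cast; rw [hkR]
    have e2 : dyap T n s = ((k:ℕ):ℝ) * T / 2^n := by
      unfold dyap; rw [← hx, hkR]
    rw [e1, e2]
    exact le_iSup (fun j : Fin (2^n) =>
      ((‖f (((j:ℕ)+1) * T / 2^n) - f ((j:ℕ) * T / 2^n)‖₊ : ℝ≥0∞))) ⟨k, hklt⟩

lemma chain_pair {T : ℝ} (hT : 0 < T) {f : ℝ → E} (hf : ContinuousOn f (Set.Icc 0 T))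
    {s t : ℝ} (hs : s ∈ Set.Icc 0 T) (ht : t ∈ Set.Icc 0 T) (hst : s ≤ t) {n : ℕ}
    (hd : t - s ≤ T / 2^n) :
    (‖f t - f s‖₊ : ℝ≥0∞) ≤ 3 * Tail T n f := by
  have tri : (‖f t - f s‖₊ : ℝ≥0∞) ≤ (‖f t - f (dyap T n t)‖₊ : ℝ≥0∞)
      + (‖f (dyap T n t) - f (dyap T n s)‖₊ : ℝ≥0∞) + (‖f (dyap T n s) - f s‖₊ : ℝ≥0∞) := by
    norm_cast
    calc ‖f t - f s‖₊ ≤ ‖f t - f (dyap T n s)‖₊ + ‖f (dyap T n s) - f s‖₊ := by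
          simpa [← nndist_eq_nnnorm] using nndist_triangle (f t) (f (dyap T n s)) (f s)
      _ ≤ (‖f t - f (dyap T n t)‖₊ + ‖f (dyap T n t) - f (dyap T n s)‖₊)
            + ‖f (dyap T n s) - f s‖₊ := by
          gcongr
          simpa [← nndist_eq_nnnorm] using nndist_triangle (f t) (f (dyap T n t)) (f (dyap T n s))
  refine tri.trans ?_
  have h1 : (‖f t - f (dyap T n t)‖₊ : ℝ≥0∞) ≤ Tail T n f :=
    ((dyap_approx hT ht hf n)).trans (Tail_succ_le T f n)
  have h2 : (‖f (dyap T n t) - f (dyap T n s)‖₊ : ℝ≥0∞) ≤ Tail T n f :=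
    (dyap_pair hT hs ht hst f hd).trans (Mdy_le_Tail T f n)
  have h3 : (‖f (dyap T n s) - f s‖₊ : ℝ≥0∞) ≤ Tail T n f := by
    rw [show (‖f (dyap T n s) - f s‖₊ : ℝ≥0∞) = (‖f s - f (dyap T n s)‖₊ : ℝ≥0∞) by
      rw [← nnnorm_neg (f (dyap T n s) - f s), neg_sub]]
    exact ((dyap_approx hT hs hf n)).trans (Tail_succ_le T f n)
  calc _ ≤ Tail T n f + Tail T n f + Tail T n f := by gcongr
    _ = 3 * Tail T n f := by ring

lemma Mdy_le_Sa (T a : ℝ) (f : ℝ → E) (n : ℕ) :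
    Mdy T n f ≤ ENNReal.ofReal (((2:ℝ)^n)^(-a)) * Sa T a f := by
  have h2 : (0:ℝ) < (2:ℝ)^n := by positivity
  have h := le_iSup (fun n : ℕ => ENNReal.ofReal (((2:ℝ)^n)^a) * Mdy T n f) n
  have hone : ENNReal.ofReal (((2:ℝ)^n)^(-a)) * ENNReal.ofReal (((2:ℝ)^n)^a) = 1 := by
    rw [← ENNReal.ofReal_mul (by positivity)]
    rw [← Real.rpow_add h2]
    simp
  calc Mdy T n f = (ENNReal.ofReal (((2:ℝ)^n)^(-a)) * ENNReal.ofReal (((2:ℝ)^n)^a)) * Mdy T n f := by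
        rw [hone, one_mul]
    _ = ENNReal.ofReal (((2:ℝ)^n)^(-a)) * (ENNReal.ofReal (((2:ℝ)^n)^a) * Mdy T n f) := by ring
    _ ≤ ENNReal.ofReal (((2:ℝ)^n)^(-a)) * Sa T a f := by gcongr; exact h

lemma Tail_le_Sa {T a : ℝ} (ha : 0 < a) (f : ℝ → E) (n : ℕ) :
    Tail T n f ≤ ENNReal.ofReal (((2:ℝ)^n)^(-a))
      * (1 - ENNReal.ofReal ((2:ℝ)^(-a)))⁻¹ * Sa T a f := by
  have key : ∀ m : ℕ, ENNReal.ofReal (((2:ℝ)^(n+m))^(-a))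
      = ENNReal.ofReal (((2:ℝ)^n)^(-a)) * (ENNReal.ofReal ((2:ℝ)^(-a)))^m := by
    intro m
    rw [← ENNReal.ofReal_pow (by positivity), ← ENNReal.ofReal_mul (by positivity)]
    congr 1
    rw [pow_add, Real.mul_rpow (by positivity) (by positivity)]
    congr 1
    rw [← Real.rpow_natCast (2:ℝ) m, ← Real.rpow_natCast ((2:ℝ)^(-a)) m,
      ← Real.rpow_mul (by norm_num), ← Real.rpow_mul (by norm_num)]
    ring_nf
  calc Tail T n f ≤ ∑' m : ℕ, ENNReal.ofReal (((2:ℝ)^(n+m))^(-a)) * Sa T a f := by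
        unfold Tail
        exact ENNReal.tsum_le_tsum (fun m => Mdy_le_Sa T a f (n+m))
    _ = (∑' m : ℕ, ENNReal.ofReal (((2:ℝ)^(n+m))^(-a))) * Sa T a f := ENNReal.tsum_mul_right
    _ = (ENNReal.ofReal (((2:ℝ)^n)^(-a)) * ∑' m : ℕ, (ENNReal.ofReal ((2:ℝ)^(-a)))^m)
          * Sa T a f := by
        rw [← ENNReal.tsum_mul_left]
        congr 1
        exact tsum_congr key
    _ = ENNReal.ofReal (((2:ℝ)^n)^(-a)) * (1 - ENNReal.ofReal ((2:ℝ)^(-a)))⁻¹ * Sa T a f := by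
        rw [ENNReal.tsum_geometric]

noncomputable def Cdet (T a : ℝ) : ℝ≥0∞ :=
  3 * (1 - ENNReal.ofReal ((2:ℝ)^(-a)))⁻¹ * ENNReal.ofReal ((2/T)^a)

lemma geo_lt_one {a : ℝ} (ha : 0 < a) : ENNReal.ofReal ((2:ℝ)^(-a)) < 1 := by
  rw [show (1:ℝ≥0∞) = ENNReal.ofReal 1 by simp]
  apply (ENNReal.ofReal_lt_ofReal_iff (by norm_num)).2
  exact Real.rpow_lt_one_of_one_lt_of_neg (by norm_num) (by linarith)

lemma Cdet_ne_top {T a : ℝ} (ha : 0 < a) : Cdet T a ≠ ⊤ := by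
  unfold Cdet
  apply ENNReal.mul_ne_top
  apply ENNReal.mul_ne_top (by norm_num)
  · rw [ENNReal.inv_ne_top]
    have := geo_lt_one ha
    simp only [ne_eq, tsub_eq_zero_iff_le, not_le]
    exact this
  · exact ENNReal.ofReal_ne_top

lemma chain_det {T a : ℝ} (hT : 0 < T) (ha : 0 < a) {f : ℝ → E}
    (hf : ContinuousOn f (Set.Icc 0 T)) :
    holderSemiOn T a f ≤ Cdet T a * Sa T a f := by
  have key : ∀ s t : ℝ, s ∈ Set.Icc 0 T → t ∈ Set.Icc 0 T → s < t →
      (‖f t - f s‖₊ : ℝ≥0∞) ≤ Cdet T a * Sa T a f * ENNReal.ofReal ((t-s)^a) := by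
    intro s t hs ht hst
    set δ := t - s with hδ
    have hδ0 : 0 < δ := by simp [hδ]; linarith
    have hδT : δ ≤ T := by simp [hδ]; linarith [hs.1, ht.2]
    have hex : ∃ n : ℕ, T < δ * 2^(n+1) := by
      obtain ⟨n, hn⟩ := pow_unbounded_of_one_lt (T/δ) (by norm_num : (1:ℝ) < 2)
      refine ⟨n, ?_⟩
      have : T/δ < 2^(n+1) := hn.trans_le (by
        apply pow_le_pow_right₀ (by norm_num) (by omega))
      calc T = (T/δ) * δ := by field_simp
        _ < 2^(n+1) * δ := by apply mul_lt_mul_of_pos_right this hδ0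
        _ = δ * 2^(n+1) := by ring
    set n := Nat.find hex with hn
    have hn1 : T < δ * 2^(n+1) := Nat.find_spec hex
    have hn2 : δ ≤ T / 2^n := by
      rcases Nat.eq_zero_or_pos n with h0 | hpos
      · rw [h0]; simpa using hδT
      · have hnot : ¬ (T < δ * 2^((n-1)+1)) := Nat.find_min hex (by omega)
        push_neg at hnot
        rw [show n - 1 + 1 = n by omega] at hnot
        rw [le_div_iff₀ (by positivity)]
        linarith [hnot]
    have hpair := chain_pair hT hf hs ht hst.le (n := n) (by rw [← hδ] at *; exact hn2)
    refine hpair.trans ?_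
    have htail := Tail_le_Sa (T := T) ha f n
    calc (3:ℝ≥0∞) * Tail T n f
        ≤ 3 * (ENNReal.ofReal (((2:ℝ)^n)^(-a)) * (1 - ENNReal.ofReal ((2:ℝ)^(-a)))⁻¹
            * Sa T a f) := by gcongr
      _ = (3 * (1 - ENNReal.ofReal ((2:ℝ)^(-a)))⁻¹ * Sa T a f)
            * ENNReal.ofReal (((2:ℝ)^n)^(-a)) := by ring
      _ ≤ (3 * (1 - ENNReal.ofReal ((2:ℝ)^(-a)))⁻¹ * Sa T a f)
            * ENNReal.ofReal ((2/T)^a * δ^a) := by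
          gcongr
          have h1 : ((2:ℝ)^n)^(-a) = ((2:ℝ)^n)⁻¹ ^ a := by
            rw [Real.rpow_neg (by positivity), ← Real.inv_rpow (by positivity)]
          rw [h1]
          have h2 : ((2:ℝ)^n)⁻¹ ≤ 2 * δ / T := by
            rw [inv_le_iff_one_le_mul₀ (by positivity)]
            rw [div_mul_eq_mul_div, le_div_iff₀ hT]
            calc (1:ℝ) * T = T := by ring
              _ ≤ 2 * δ * 2^n := by
                have : (2:ℝ)^(n+1) = 2 * 2^n := by ring
                nlinarith [hn1]
          calc ((2:ℝ)^n)⁻¹ ^ a ≤ (2 * δ / T) ^ a := by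
                apply Real.rpow_le_rpow (by positivity) h2 ha.le
            _ = (2/T)^a * δ^a := by
                rw [← Real.mul_rpow (by positivity) (by positivity)]
                congr 1
                field_simp
      _ = Cdet T a * Sa T a f * ENNReal.ofReal ((t-s)^a) := by
          rw [ENNReal.ofReal_mul (by positivity)]
          unfold Cdet
          ring
  unfold holderSemiOn
  refine iSup_le fun s => iSup_le fun t => iSup_le fun hs => iSup_le fun ht =>
    iSup_le fun hne => ?_
  have hapos : ∀ u v : ℝ, u < v → ENNReal.ofReal ((v-u)^a) ≠ 0 ∧
      ENNReal.ofReal ((v-u)^a) ≠ ⊤ := by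
    intro u v huv
    constructor
    · simp only [ne_eq, ENNReal.ofReal_eq_zero, not_le]
      apply Real.rpow_pos_of_pos; linarith
    · exact ENNReal.ofReal_ne_top
  rcases lt_or_gt_of_ne hne with h | h
  · rw [show |s - t| = t - s by rw [abs_sub_comm]; exact abs_of_pos (by linarith)]
    rw [show (‖f s - f t‖₊ : ℝ≥0∞) = (‖f t - f s‖₊ : ℝ≥0∞) by
      rw [← nnnorm_neg (f s - f t), neg_sub]]
    exact (ENNReal.div_le_iff_le_mul (Or.inl (hapos s t h).1) (Or.inl (hapos s t h).2)).2
      (key s t hs ht h)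
  · rw [show |s - t| = s - t by exact abs_of_pos (by linarith)]
    exact (ENNReal.div_le_iff_le_mul (Or.inl (hapos t s h).1) (Or.inl (hapos t s h).2)).2
      (key t s ht hs h)

lemma holderSemiOn_pair (T r : ℝ) (f : ℝ → E) {s t : ℝ} (hs : s ∈ Set.Icc 0 T)
    (ht : t ∈ Set.Icc 0 T) (hne : s ≠ t) :
    (‖f s - f t‖₊ : ℝ≥0∞) ≤ holderSemiOn T r f * ENNReal.ofReal (|s-t|^r) := by
  have hle : (‖f s - f t‖₊ : ℝ≥0∞) / ENNReal.ofReal (|s-t|^r) ≤ holderSemiOn T r f :=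
    le_iSup_of_le s <| le_iSup_of_le t <| le_iSup_of_le hs <| le_iSup_of_le ht <|
      le_iSup_of_le hne le_rfl
  have h0 : ENNReal.ofReal (|s-t|^r) ≠ 0 := by
    simp only [ne_eq, ENNReal.ofReal_eq_zero, not_le]
    apply Real.rpow_pos_of_pos
    simpa [sub_eq_zero] using abs_pos.2 (sub_ne_zero.2 hne)
  exact (ENNReal.div_le_iff_le_mul (Or.inl h0) (Or.inl ENNReal.ofReal_ne_top)).1 hle

lemma supNormOn_le {T a : ℝ} (hT : 0 < T) (ha : 0 < a) (f : ℝ → E) :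
    supNormOn T f ≤ (‖f 0‖₊ : ℝ≥0∞) + ENNReal.ofReal (T^a) * holderSemiOn T a f := by
  unfold supNormOn
  refine iSup_le fun t => iSup_le fun ht => ?_
  rcases eq_or_ne t 0 with rfl | hne
  · exact le_add_of_le_of_nonneg le_rfl zero_le
  · have tri : (‖f t‖₊ : ℝ≥0∞) ≤ (‖f 0‖₊ : ℝ≥0∞) + (‖f t - f 0‖₊ : ℝ≥0∞) := by
      norm_cast
      calc ‖f t‖₊ = ‖f 0 + (f t - f 0)‖₊ := by congr 1; abel
        _ ≤ ‖f 0‖₊ + ‖f t - f 0‖₊ := nnnorm_add_le _ _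
    refine tri.trans ?_
    gcongr
    have h0T : (0:ℝ) ∈ Set.Icc (0:ℝ) T := ⟨le_rfl, hT.le⟩
    have := holderSemiOn_pair T a f ht h0T hne
    refine this.trans ?_
    rw [mul_comm]
    gcongr
    rw [sub_zero, abs_of_nonneg ht.1]
    exact ht.2

end CorH

namespace CorH

variable {Ω E : Type} [MeasurableSpace Ω] [NormedAddCommGroup E]

lemma meas_rpow {f : Ω → ℝ≥0∞} (hf : Measurable f) (p : ℝ) :
    Measurable fun ω => f ω ^ p :=
  (by measurability : Measurable (fun x : ℝ≥0∞ => x ^ p)).comp hf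

lemma grid_mem {T : ℝ} (hT : 0 < T) {n : ℕ} {x : ℝ} (hx0 : 0 ≤ x) (hx : x ≤ 2^n) :
    x * T / 2^n ∈ Set.Icc (0:ℝ) T := by
  have h2 : (0:ℝ) < 2^n := by positivity
  constructor
  · positivity
  · rw [div_le_iff₀ h2]
    nlinarith

lemma grid_mem_fin {T : ℝ} (hT : 0 < T) {n : ℕ} (k : Fin (2^n)) :
    ((k:ℕ):ℝ) * T / 2^n ∈ Set.Icc (0:ℝ) T ∧ (((k:ℕ):ℝ)+1) * T / 2^n ∈ Set.Icc (0:ℝ) T := by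
  have hk2 := k.2
  have hk : ((k:ℕ):ℝ) + 1 ≤ 2^n := by
    have h1 : ((k:ℕ):ℝ) + 1 ≤ ((2^n : ℕ):ℝ) := by exact_mod_cast hk2
    simpa using h1
  exact ⟨grid_mem hT (by positivity) (by linarith), grid_mem hT (by positivity) hk⟩

lemma Mdy_meas {T : ℝ} (hT : 0 < T) (X : ℝ → Ω → E)
    (hX : ∀ t ∈ Set.Icc (0:ℝ) T, StronglyMeasurable (X t)) (n : ℕ) :
    Measurable (fun ω => Mdy T n (fun t => X t ω)) := by
  apply Measurable.iSup
  intro k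
  exact ((hX _ (grid_mem_fin hT k).2).sub (hX _ (grid_mem_fin hT k).1)).nnnorm.measurable.coe_nnreal_ennreal

lemma lpHolderSemi_pair {P : Measure Ω} {T p r : ℝ} (hr : 0 < r) (X : ℝ → Ω → E)
    {s t : ℝ} (hs : s ∈ Set.Icc 0 T) (ht : t ∈ Set.Icc 0 T) :
    eLpNorm (fun ω => X s ω - X t ω) (ENNReal.ofReal p) P
      ≤ lpHolderSemi P T p r X * ENNReal.ofReal (|s-t|^r) := by
  rcases eq_or_ne s t with rfl | hne
  · have h0 : (fun ω => X s ω - X s ω) = (fun _ : Ω => (0:E)) := by funext ω; simp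
    rw [h0, eLpNorm_zero']
    exact zero_le
  · have hle : eLpNorm (fun ω => X s ω - X t ω) (ENNReal.ofReal p) P
        / ENNReal.ofReal (|s-t|^r) ≤ lpHolderSemi P T p r X :=
      le_iSup_of_le s <| le_iSup_of_le t <| le_iSup_of_le hs <| le_iSup_of_le ht <|
        le_iSup_of_le hne le_rfl
    have h0 : ENNReal.ofReal (|s-t|^r) ≠ 0 := by
      simp only [ne_eq, ENNReal.ofReal_eq_zero, not_le]
      apply Real.rpow_pos_of_pos
      exact abs_pos.2 (sub_ne_zero.2 hne)
    exact (ENNReal.div_le_iff_le_mul (Or.inl h0) (Or.inl ENNReal.ofReal_ne_top)).1 hle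

lemma iSup_le_tsum_rpow {ι : Type} [Countable ι] (f : ι → ℝ≥0∞) {p : ℝ} (hp : 0 < p) :
    (⨆ i, f i) ^ p ≤ ∑' i, (f i) ^ p := by
  have key : (⨆ i, f i) ≤ (∑' i, (f i) ^ p) ^ (1/p) := by
    refine iSup_le fun i => ?_
    have h1 : f i = ((f i) ^ p) ^ (1/p) := by
      rw [← ENNReal.rpow_mul, mul_one_div, div_self hp.ne', ENNReal.rpow_one]
    rw [h1]
    exact ENNReal.rpow_le_rpow (ENNReal.le_tsum i) (by positivity)
  calc (⨆ i, f i) ^ p ≤ ((∑' i, (f i) ^ p) ^ (1/p)) ^ p := ENNReal.rpow_le_rpow key hp.le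
    _ = ∑' i, (f i) ^ p := by
      rw [← ENNReal.rpow_mul, one_div_mul_cancel hp.ne', ENNReal.rpow_one]

lemma iSup_fin_le_sum_rpow {m : ℕ} (f : Fin m → ℝ≥0∞) {p : ℝ} (hp : 0 < p) :
    (⨆ i, f i) ^ p ≤ ∑ i : Fin m, (f i) ^ p := by
  refine (iSup_le_tsum_rpow f hp).trans ?_
  rw [tsum_fintype]

lemma add_sq_rpow (x y : ℝ≥0∞) {p : ℝ} (hp : 0 ≤ p) :
    (x + y) ^ p ≤ (2:ℝ≥0∞) ^ p * (x ^ p + y ^ p) := by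
  have h1 : x + y ≤ 2 * (x ⊔ y) := by
    rw [two_mul]
    exact add_le_add le_sup_left le_sup_right
  calc (x + y) ^ p ≤ (2 * (x ⊔ y)) ^ p := ENNReal.rpow_le_rpow h1 hp
    _ = (2:ℝ≥0∞) ^ p * (x ⊔ y) ^ p := ENNReal.mul_rpow_of_nonneg _ _ hp
    _ ≤ (2:ℝ≥0∞) ^ p * (x ^ p + y ^ p) := by
      gcongr
      rcases le_total x y with h | h
      · rw [sup_eq_right.2 h]; exact le_add_self
      · rw [sup_eq_left.2 h]; exact le_self_add

lemma real_geo {T a b p : ℝ} (hT : 0 < T) (n : ℕ) :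
    ((2:ℝ)^n)^(a*p) * ((2:ℝ)^n * (T/2^n)^(b*p)) = T^(b*p) * ((2:ℝ)^(a*p+1-b*p))^n := by
  have h2 : (0:ℝ) < 2^n := by positivity
  rw [Real.div_rpow hT.le h2.le]
  rw [← Real.rpow_natCast ((2:ℝ)^(a*p+1-b*p)) n, ← Real.rpow_natCast (2:ℝ) n]
  rw [← Real.rpow_mul (by norm_num), ← Real.rpow_mul (by norm_num),
    ← Real.rpow_mul (by norm_num)]
  rw [div_eq_mul_inv, ← Real.rpow_neg (by positivity)]
  rw [show ∀ x y z w : ℝ, (2:ℝ)^x * ((2:ℝ)^y * (w * (2:ℝ)^z)) = w * ((2:ℝ)^x * (2:ℝ)^y * (2:ℝ)^z)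
    from fun x y z w => by ring]
  rw [← Real.rpow_add (by norm_num), ← Real.rpow_add (by norm_num)]
  congr 1
  ring

lemma lemA {P : Measure Ω} {T p a b : ℝ} (hT : 0 < T) (hp : 1 < p) (ha : 0 < a)
    (hab : a + 1/p < b) :
    ∃ C : ℝ≥0∞, C ≠ ⊤ ∧ ∀ X : ℝ → Ω → E,
      (∀ t ∈ Set.Icc (0:ℝ) T, StronglyMeasurable (X t)) →
      (∀ ω, ContinuousOn (fun t => X t ω) (Set.Icc 0 T)) →
      lpOfHolderNorm P T p a X
        ≤ C * (eLpNorm (X 0) (ENNReal.ofReal p) P + lpHolderSemi P T p b X) := by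
  have hp0 : (0:ℝ) < p := by linarith
  have hb : 0 < b := by
    have h1 : 0 < 1/p := by positivity
    linarith
  set q : ℝ≥0∞ := ENNReal.ofReal p with hq
  have hq0 : q ≠ 0 := by
    simp [hq, ENNReal.ofReal_eq_zero, not_le, hp0]
  have hqt : q ≠ ⊤ := ENNReal.ofReal_ne_top
  have hqr : q.toReal = p := ENNReal.toReal_ofReal hp0.le
  set ρ : ℝ := (2:ℝ) ^ (a*p + 1 - b*p) with hρ
  have hρpos : 0 < ρ := Real.rpow_pos_of_pos (by norm_num) _
  have hρ1 : ENNReal.ofReal ρ < 1 := by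
    rw [show (1:ℝ≥0∞) = ENNReal.ofReal 1 by simp]
    apply (ENNReal.ofReal_lt_ofReal_iff (by norm_num)).2
    apply Real.rpow_lt_one_of_one_lt_of_neg (by norm_num)
    have h1p : a*p + 1 - b*p = (a + 1/p - b) * p := by field_simp
    rw [h1p]
    exact mul_neg_of_neg_of_pos (by linarith) hp0
  set CSp : ℝ≥0∞ := ENNReal.ofReal (T^(b*p)) * (1 - ENNReal.ofReal ρ)⁻¹ with hCSp
  have hCSp_ne : CSp ≠ ⊤ := by
    apply ENNReal.mul_ne_top ENNReal.ofReal_ne_top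
    rw [ENNReal.inv_ne_top]
    simp only [ne_eq, tsub_eq_zero_iff_le, not_le]
    exact hρ1
  set c1 : ℝ≥0∞ := (1 + ENNReal.ofReal (T^a)) * Cdet T a with hc1
  have hc1_ne : c1 ≠ ⊤ :=
    ENNReal.mul_ne_top (ENNReal.add_ne_top.2 ⟨by norm_num, ENNReal.ofReal_ne_top⟩)
      (Cdet_ne_top ha)
  set CS' : ℝ≥0∞ := CSp ^ (1/p) with hCS'
  have hCS'_ne : CS' ≠ ⊤ := ENNReal.rpow_ne_top_of_nonneg (by positivity) hCSp_ne
  refine ⟨2 + 2 * (c1 * CS'), ?_, ?_⟩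
  · exact ENNReal.add_ne_top.2 ⟨by norm_num,
      ENNReal.mul_ne_top (by norm_num) (ENNReal.mul_ne_top hc1_ne hCS'_ne)⟩
  intro X hXm hXc
  set H : ℝ≥0∞ := lpHolderSemi P T p b X with hH
  set A : ℝ≥0∞ := eLpNorm (X 0) q P with hA
  have hpath : ∀ ω, holderNormOn T a (fun t => X t ω)
      ≤ (‖X 0 ω‖₊ : ℝ≥0∞) + c1 * Sa T a (fun t => X t ω) := by
    intro ω
    have h1 : holderSemiOn T a (fun t => X t ω) ≤ Cdet T a * Sa T a (fun t => X t ω) :=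
      chain_det hT ha (hXc ω)
    have h2 : supNormOn T (fun t => X t ω) ≤ (‖X 0 ω‖₊ : ℝ≥0∞)
        + ENNReal.ofReal (T^a) * holderSemiOn T a (fun t => X t ω) :=
      supNormOn_le hT ha _
    unfold holderNormOn
    calc supNormOn T (fun t => X t ω) + holderSemiOn T a (fun t => X t ω)
        ≤ ((‖X 0 ω‖₊ : ℝ≥0∞) + ENNReal.ofReal (T^a) * holderSemiOn T a (fun t => X t ω))
          + holderSemiOn T a (fun t => X t ω) := by gcongr
      _ = (‖X 0 ω‖₊ : ℝ≥0∞)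
          + (1 + ENNReal.ofReal (T^a)) * holderSemiOn T a (fun t => X t ω) := by ring
      _ ≤ (‖X 0 ω‖₊ : ℝ≥0∞)
          + (1 + ENNReal.ofReal (T^a)) * (Cdet T a * Sa T a (fun t => X t ω)) := by gcongr
      _ = (‖X 0 ω‖₊ : ℝ≥0∞) + c1 * Sa T a (fun t => X t ω) := by rw [hc1]; ring
  have hMdy : ∀ n : ℕ, ∫⁻ ω, (Mdy T n (fun t => X t ω)) ^ p ∂P
      ≤ (2:ℝ≥0∞)^n * (H * ENNReal.ofReal ((T/2^n)^b)) ^ p := by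
    intro n
    set g : Fin (2^n) → Ω → ℝ≥0∞ := fun k ω =>
      (‖X ((((k:ℕ):ℝ)+1) * T / 2^n) ω - X (((k:ℕ):ℝ) * T / 2^n) ω‖₊ : ℝ≥0∞) with hg
    have hgmeas : ∀ k, Measurable fun ω => (g k ω) ^ p := fun k =>
      meas_rpow (((hXm _ (grid_mem_fin hT k).2).sub (hXm _ (grid_mem_fin hT k).1)).nnnorm.measurable.coe_nnreal_ennreal) p
    have hstep : ∀ ω, (Mdy T n (fun t => X t ω)) ^ p ≤ ∑ k : Fin (2^n), (g k ω) ^ p :=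
      fun ω => iSup_fin_le_sum_rpow (fun k => g k ω) hp0
    calc ∫⁻ ω, (Mdy T n (fun t => X t ω)) ^ p ∂P
        ≤ ∫⁻ ω, ∑ k : Fin (2^n), (g k ω) ^ p ∂P := lintegral_mono hstep
      _ = ∑ k : Fin (2^n), ∫⁻ ω, (g k ω) ^ p ∂P :=
          lintegral_finset_sum _ (fun k _ => hgmeas k)
      _ ≤ ∑ _k : Fin (2^n), (H * ENNReal.ofReal ((T/2^n)^b)) ^ p := by
          refine Finset.sum_le_sum fun k _ => ?_
          have he : ∫⁻ ω, (g k ω) ^ p ∂P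
              = (eLpNorm (fun ω => X ((((k:ℕ):ℝ)+1) * T / 2^n) ω
                  - X (((k:ℕ):ℝ) * T / 2^n) ω) q P) ^ p := by
            rw [eLpNorm_eq_lintegral_rpow_enorm_toReal hq0 hqt, hqr]
            rw [← ENNReal.rpow_mul, one_div_mul_cancel hp0.ne', ENNReal.rpow_one]
            rfl
          rw [he]
          refine ENNReal.rpow_le_rpow ?_ hp0.le
          have hpair := lpHolderSemi_pair (P := P) (T := T) (p := p) hb X
            (grid_mem_fin hT k).2 (grid_mem_fin hT k).1
          refine hpair.trans ?_
          have hd : |(((k:ℕ):ℝ)+1) * T / 2^n - ((k:ℕ):ℝ) * T / 2^n| = T / 2^n := by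
            have heq : (((k:ℕ):ℝ)+1) * T / 2^n - ((k:ℕ):ℝ) * T / 2^n = T / 2^n := by
              field_simp
              ring
            rw [heq, abs_of_pos (by positivity)]
          rw [hd]
      _ = (2:ℝ≥0∞)^n * (H * ENNReal.ofReal ((T/2^n)^b)) ^ p := by
          rw [Finset.sum_const, Finset.card_univ, Fintype.card_fin, nsmul_eq_mul]
          congr 1
          push_cast
          ring
  have hSa : ∫⁻ ω, (Sa T a (fun t => X t ω)) ^ p ∂P ≤ H ^ p * CSp := by
    have hptw : ∀ ω, (Sa T a (fun t => X t ω)) ^ p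
        ≤ ∑' n : ℕ, (ENNReal.ofReal (((2:ℝ)^n)^a) * Mdy T n (fun t => X t ω)) ^ p :=
      fun ω => iSup_le_tsum_rpow _ hp0
    have hmeasn : ∀ n : ℕ, Measurable fun ω =>
        (ENNReal.ofReal (((2:ℝ)^n)^a) * Mdy T n (fun t => X t ω)) ^ p :=
      fun n => meas_rpow ((Mdy_meas hT X hXm n).const_mul _) p
    have hterm : ∀ n : ℕ,
        (ENNReal.ofReal (((2:ℝ)^n)^a))^p * ((2:ℝ≥0∞)^n * (H * ENNReal.ofReal ((T/2^n)^b)) ^ p)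
          = H^p * (ENNReal.ofReal (T^(b*p)) * (ENNReal.ofReal ρ)^n) := by
      intro n
      have h2 : (0:ℝ) < 2^n := by positivity
      have e1 : (ENNReal.ofReal (((2:ℝ)^n)^a))^p = ENNReal.ofReal (((2:ℝ)^n)^(a*p)) := by
        rw [ENNReal.ofReal_rpow_of_nonneg (by positivity) hp0.le, Real.rpow_mul (by positivity)]
      have e2 : (ENNReal.ofReal ((T/2^n)^b))^p = ENNReal.ofReal ((T/2^n)^(b*p)) := by
        rw [ENNReal.ofReal_rpow_of_nonneg (by positivity) hp0.le, Real.rpow_mul (by positivity)]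
      have e3 : (2:ℝ≥0∞)^n = ENNReal.ofReal ((2:ℝ)^n) := by
        rw [ENNReal.ofReal_pow (by norm_num)]
        norm_num
      rw [ENNReal.mul_rpow_of_nonneg _ _ hp0.le, e1, e2, e3]
      rw [show ∀ x y z w : ℝ≥0∞, x * (y * (z * w)) = z * (x * (y * w)) from
        fun x y z w => by ring]
      congr 1
      rw [← ENNReal.ofReal_mul (by positivity), ← ENNReal.ofReal_mul (by positivity)]
      rw [real_geo hT n]
      rw [ENNReal.ofReal_mul (by positivity), ENNReal.ofReal_pow hρpos.le]
    calc ∫⁻ ω, (Sa T a (fun t => X t ω)) ^ p ∂P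
        ≤ ∫⁻ ω, ∑' n : ℕ, (ENNReal.ofReal (((2:ℝ)^n)^a) * Mdy T n (fun t => X t ω)) ^ p ∂P :=
          lintegral_mono hptw
      _ = ∑' n : ℕ, ∫⁻ ω, (ENNReal.ofReal (((2:ℝ)^n)^a) * Mdy T n (fun t => X t ω)) ^ p ∂P :=
          lintegral_tsum (fun n => (hmeasn n).aemeasurable)
      _ ≤ ∑' n : ℕ, H^p * (ENNReal.ofReal (T^(b*p)) * (ENNReal.ofReal ρ)^n) := by
          refine ENNReal.tsum_le_tsum fun n => ?_
          rw [← hterm n]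
          have hsplit : ∀ ω, (ENNReal.ofReal (((2:ℝ)^n)^a) * Mdy T n (fun t => X t ω)) ^ p
              = (ENNReal.ofReal (((2:ℝ)^n)^a))^p * (Mdy T n (fun t => X t ω))^p :=
            fun ω => ENNReal.mul_rpow_of_nonneg _ _ hp0.le
          calc ∫⁻ ω, (ENNReal.ofReal (((2:ℝ)^n)^a) * Mdy T n (fun t => X t ω)) ^ p ∂P
              = ∫⁻ ω, (ENNReal.ofReal (((2:ℝ)^n)^a))^p * (Mdy T n (fun t => X t ω))^p ∂P := by
                simp_rw [hsplit]
            _ = (ENNReal.ofReal (((2:ℝ)^n)^a))^p * ∫⁻ ω, (Mdy T n (fun t => X t ω))^p ∂P :=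
                lintegral_const_mul' _ _
                  (ENNReal.rpow_ne_top_of_nonneg hp0.le ENNReal.ofReal_ne_top)
            _ ≤ (ENNReal.ofReal (((2:ℝ)^n)^a))^p *
                  ((2:ℝ≥0∞)^n * (H * ENNReal.ofReal ((T/2^n)^b)) ^ p) := by
                gcongr
                exact hMdy n
      _ = H^p * CSp := by
          rw [ENNReal.tsum_mul_left, ENNReal.tsum_mul_left, ENNReal.tsum_geometric, hCSp]
  -- assemble
  have hX0meas : Measurable fun ω => ((‖X 0 ω‖₊ : ℝ≥0∞)) ^ p :=
    meas_rpow (hXm 0 ⟨le_rfl, hT.le⟩).nnnorm.measurable.coe_nnreal_ennreal p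
  have h2p_ne : ((2:ℝ≥0∞)^p) ≠ ⊤ := ENNReal.rpow_ne_top_of_nonneg hp0.le (by norm_num)
  have hc1p_ne : (c1^p) ≠ ⊤ := ENNReal.rpow_ne_top_of_nonneg hp0.le hc1_ne
  have hint : ∫⁻ ω, (holderNormOn T a (fun t => X t ω)) ^ p ∂P
      ≤ (2:ℝ≥0∞)^p * ((∫⁻ ω, ((‖X 0 ω‖₊ : ℝ≥0∞)) ^ p ∂P) + c1^p * (H^p * CSp)) := by
    calc ∫⁻ ω, (holderNormOn T a (fun t => X t ω)) ^ p ∂P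
        ≤ ∫⁻ ω, ((‖X 0 ω‖₊ : ℝ≥0∞) + c1 * Sa T a (fun t => X t ω)) ^ p ∂P :=
          lintegral_mono (fun ω => ENNReal.rpow_le_rpow (hpath ω) hp0.le)
      _ ≤ ∫⁻ ω, (2:ℝ≥0∞)^p * (((‖X 0 ω‖₊ : ℝ≥0∞))^p + (c1 * Sa T a (fun t => X t ω))^p) ∂P :=
          lintegral_mono (fun ω => add_sq_rpow _ _ hp0.le)
      _ = (2:ℝ≥0∞)^p * ∫⁻ ω, ((‖X 0 ω‖₊ : ℝ≥0∞))^p + (c1 * Sa T a (fun t => X t ω))^p ∂P :=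
          lintegral_const_mul' _ _ h2p_ne
      _ = (2:ℝ≥0∞)^p * ((∫⁻ ω, ((‖X 0 ω‖₊ : ℝ≥0∞))^p ∂P)
            + ∫⁻ ω, (c1 * Sa T a (fun t => X t ω))^p ∂P) := by
          rw [lintegral_add_left hX0meas]
      _ = (2:ℝ≥0∞)^p * ((∫⁻ ω, ((‖X 0 ω‖₊ : ℝ≥0∞))^p ∂P)
            + c1^p * ∫⁻ ω, (Sa T a (fun t => X t ω))^p ∂P) := by
          have h1 : ∫⁻ ω, (c1 * Sa T a (fun t => X t ω))^p ∂P
              = c1^p * ∫⁻ ω, (Sa T a (fun t => X t ω))^p ∂P := by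
            rw [← lintegral_const_mul' _ _ hc1p_ne]
            exact lintegral_congr fun ω => ENNReal.mul_rpow_of_nonneg _ _ hp0.le
          rw [h1]
      _ ≤ (2:ℝ≥0∞)^p * ((∫⁻ ω, ((‖X 0 ω‖₊ : ℝ≥0∞))^p ∂P) + c1^p * (H^p * CSp)) := by
          gcongr
  have hA_eq : (∫⁻ ω, ((‖X 0 ω‖₊ : ℝ≥0∞)) ^ p ∂P) ^ (1/p) = A := by
    rw [hA, eLpNorm_eq_lintegral_rpow_enorm_toReal hq0 hqt, hqr]
    rfl
  unfold lpOfHolderNorm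
  calc (∫⁻ ω, (holderNormOn T a (fun t => X t ω)) ^ p ∂P) ^ (1/p)
      ≤ ((2:ℝ≥0∞)^p * ((∫⁻ ω, ((‖X 0 ω‖₊ : ℝ≥0∞)) ^ p ∂P) + c1^p * (H^p * CSp))) ^ (1/p) :=
        ENNReal.rpow_le_rpow hint (by positivity)
    _ = 2 * ((∫⁻ ω, ((‖X 0 ω‖₊ : ℝ≥0∞)) ^ p ∂P) + c1^p * (H^p * CSp)) ^ (1/p) := by
        rw [ENNReal.mul_rpow_of_nonneg _ _ (by positivity)]
        congr 1
        rw [← ENNReal.rpow_mul, mul_one_div, div_self hp0.ne', ENNReal.rpow_one]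
    _ ≤ 2 * (((∫⁻ ω, ((‖X 0 ω‖₊ : ℝ≥0∞)) ^ p ∂P)) ^ (1/p) + (c1^p * (H^p * CSp)) ^ (1/p)) := by
        gcongr
        exact ENNReal.rpow_add_le_add_rpow _ _ (by positivity) (by
          rw [div_le_one hp0]; linarith)
    _ = 2 * (A + c1 * (H * CS')) := by
        rw [hA_eq]
        congr 2
        rw [ENNReal.mul_rpow_of_nonneg (c1^p) (H^p * CSp) (by positivity),
          ENNReal.mul_rpow_of_nonneg (H^p) CSp (by positivity)]
        rw [← ENNReal.rpow_mul c1, ← ENNReal.rpow_mul H, mul_one_div, div_self hp0.ne',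
          ENNReal.rpow_one, ENNReal.rpow_one]
    _ ≤ (2 + 2 * (c1 * CS')) * (A + H) := by
        calc 2 * (A + c1 * (H * CS')) = 2 * A + (2 * (c1 * CS')) * H := by ring
          _ ≤ (2 + 2 * (c1 * CS')) * A + (2 + 2 * (c1 * CS')) * H :=
              add_le_add (mul_le_mul_left le_self_add A) (mul_le_mul_left le_add_self H)
          _ = (2 + 2 * (c1 * CS')) * (A + H) := by ring

end CorH

namespace CorH

variable {E : Type} [NormedAddCommGroup E]

lemma holderSemiOn_mono_exp {T a a' : ℝ} (hT : 0 < T) (ha : 0 ≤ a) (haa : a ≤ a')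
    (f : ℝ → E) :
    holderSemiOn T a f ≤ ENNReal.ofReal ((max 1 T)^(a'-a)) * holderSemiOn T a' f := by
  set K := ENNReal.ofReal ((max 1 T)^(a'-a)) with hK
  unfold holderSemiOn
  refine iSup_le fun s => iSup_le fun t => iSup_le fun hs => iSup_le fun ht =>
    iSup_le fun hne => ?_
  have habs : 0 < |s - t| := abs_pos.2 (sub_ne_zero.2 hne)
  have habsT : |s - t| ≤ max 1 T := by
    rw [abs_sub_le_iff]
    constructor <;> [nlinarith [hs.1, hs.2, ht.1, ht.2, le_max_right 1 T];
      nlinarith [hs.1, hs.2, ht.1, ht.2, le_max_right 1 T]]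
  have key : (‖f s - f t‖₊ : ℝ≥0∞) ≤ (K * holderSemiOn T a' f) * ENNReal.ofReal (|s-t|^a) := by
    refine (holderSemiOn_pair T a' f hs ht hne).trans ?_
    have h1 : |s-t|^a' ≤ (max 1 T)^(a'-a) * |s-t|^a := by
      have h2 : |s-t|^a' = |s-t|^(a'-a) * |s-t|^a := by
        rw [← Real.rpow_add habs]; ring_nf
      rw [h2]
      exact mul_le_mul_of_nonneg_right (Real.rpow_le_rpow habs.le habsT (by linarith))
        (Real.rpow_nonneg (abs_nonneg _) a)
    calc holderSemiOn T a' f * ENNReal.ofReal (|s-t|^a')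
        ≤ holderSemiOn T a' f * ENNReal.ofReal ((max 1 T)^(a'-a) * |s-t|^a) := by
          gcongr
      _ = (K * holderSemiOn T a' f) * ENNReal.ofReal (|s-t|^a) := by
          rw [ENNReal.ofReal_mul (by positivity), hK]
          ring
  have h0 : ENNReal.ofReal (|s-t|^a) ≠ 0 := by
    simp only [ne_eq, ENNReal.ofReal_eq_zero, not_le]
    exact Real.rpow_pos_of_pos habs a
  exact (ENNReal.div_le_iff_le_mul (Or.inl h0) (Or.inl ENNReal.ofReal_ne_top)).2 key

lemma holderNormOn_mono_exp {T a a' : ℝ} (hT : 0 < T) (ha : 0 ≤ a) (haa : a ≤ a')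
    (f : ℝ → E) :
    holderNormOn T a f
      ≤ (1 + ENNReal.ofReal ((max 1 T)^(a'-a))) * holderNormOn T a' f := by
  set K := ENNReal.ofReal ((max 1 T)^(a'-a)) with hK
  unfold holderNormOn
  calc supNormOn T f + holderSemiOn T a f
      ≤ supNormOn T f + K * holderSemiOn T a' f :=
        add_le_add le_rfl (holderSemiOn_mono_exp hT ha haa f)
    _ ≤ (1 + K) * supNormOn T f + (1 + K) * holderSemiOn T a' f := by
        nth_rewrite 1 [← one_mul (supNormOn T f)]
        exact add_le_add (mul_le_mul_left le_self_add _) (mul_le_mul_left le_add_self _)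
    _ = (1 + K) * (supNormOn T f + holderSemiOn T a' f) := by ring

lemma lpOfHolderNorm_mono_exp {Ω : Type} [MeasurableSpace Ω] {P : Measure Ω}
    {T p a a' : ℝ} (hT : 0 < T) (hp0 : 0 < p) (ha : 0 ≤ a) (haa : a ≤ a')
    (X : ℝ → Ω → E) :
    lpOfHolderNorm P T p a X
      ≤ (1 + ENNReal.ofReal ((max 1 T)^(a'-a))) * lpOfHolderNorm P T p a' X := by
  set c : ℝ≥0∞ := 1 + ENNReal.ofReal ((max 1 T)^(a'-a)) with hc
  have hc_ne : c ≠ ⊤ := ENNReal.add_ne_top.2 ⟨by norm_num, ENNReal.ofReal_ne_top⟩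
  have hcp_ne : c^p ≠ ⊤ := ENNReal.rpow_ne_top_of_nonneg hp0.le hc_ne
  unfold lpOfHolderNorm
  calc (∫⁻ ω, (holderNormOn T a (fun t => X t ω)) ^ p ∂P) ^ (1/p)
      ≤ (∫⁻ ω, c^p * (holderNormOn T a' (fun t => X t ω)) ^ p ∂P) ^ (1/p) := by
        apply ENNReal.rpow_le_rpow ?_ (by positivity)
        apply lintegral_mono fun ω => ?_
        rw [← ENNReal.mul_rpow_of_nonneg _ _ hp0.le]
        exact ENNReal.rpow_le_rpow (holderNormOn_mono_exp hT ha haa _) hp0.le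
    _ = (c^p * ∫⁻ ω, (holderNormOn T a' (fun t => X t ω)) ^ p ∂P) ^ (1/p) := by
        rw [lintegral_const_mul' _ _ hcp_ne]
    _ = c * (∫⁻ ω, (holderNormOn T a' (fun t => X t ω)) ^ p ∂P) ^ (1/p) := by
        rw [ENNReal.mul_rpow_of_nonneg (c^p) _ (by positivity)]
        congr 1
        rw [← ENNReal.rpow_mul, mul_one_div, div_self hp0.ne', ENNReal.rpow_one]

/- partition lemmas -/

lemma theta_mono {K : ℕ} {θ : ℕ → ℝ} (hmono : ∀ j, j < K → θ j < θ (j+1)) :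
    ∀ {i j}, i ≤ j → j ≤ K → θ i ≤ θ j := by
  intro i j hij hjK
  induction j with
  | zero =>
    have : i = 0 := by omega
    simp [this]
  | succ j ih =>
    rcases Nat.lt_or_ge i (j+1) with h | h
    · have h1 : θ i ≤ θ j := ih (by omega) (by omega)
      have h2 := hmono j (by omega)
      linarith
    · have : i = j+1 := by omega
      simp [this]

lemma le_dMax {K : ℕ} (θ : ℕ → ℝ) {j : ℕ} (hj : j < K) :
    θ (j+1) - θ j ≤ dMax K θ := by
  exact le_ciSup (f := fun j : Fin K => θ ((j:ℕ)+1) - θ (j:ℕ))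
    (Set.Finite.bddAbove (Set.finite_range _)) ⟨j, hj⟩

lemma dMin_le {K : ℕ} (θ : ℕ → ℝ) {j : ℕ} (hj : j < K) :
    dMin K θ ≤ θ (j+1) - θ j := by
  exact ciInf_le (f := fun j : Fin K => θ ((j:ℕ)+1) - θ (j:ℕ))
    (Set.Finite.bddBelow (Set.finite_range _)) ⟨j, hj⟩

lemma dMin_pos {K : ℕ} {θ : ℕ → ℝ} (hK : 1 ≤ K) (hmono : ∀ j, j < K → θ j < θ (j+1)) :
    0 < dMin K θ := by
  have hne : Nonempty (Fin K) := ⟨⟨0, hK⟩⟩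
  obtain ⟨j0, hj0⟩ := Finite.exists_min (fun j : Fin K => θ (j+1) - θ j)
  have h1 : θ ((j0:ℕ)+1) - θ (j0:ℕ) ≤ dMin K θ := by
    unfold dMin
    refine le_ciInf fun x => ?_
    exact hj0 x
  have h2 := hmono (j0:ℕ) j0.2
  linarith

lemma dMax_pos {K : ℕ} {θ : ℕ → ℝ} (hK : 1 ≤ K) (hmono : ∀ j, j < K → θ j < θ (j+1)) :
    0 < dMax K θ := by
  have h1 := dMin_pos hK hmono
  have h2 : dMin K θ ≤ θ (0+1) - θ 0 := dMin_le θ hK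
  have h3 := le_dMax θ hK
  linarith

lemma dMax_le_T {K : ℕ} {θ : ℕ → ℝ} {T : ℝ} (hK : 1 ≤ K) (h0 : θ 0 = 0) (hTK : θ K = T)
    (hmono : ∀ j, j < K → θ j < θ (j+1)) : dMax K θ ≤ T := by
  unfold dMax
  have hne : Nonempty (Fin K) := ⟨⟨0, hK⟩⟩
  refine ciSup_le fun j => ?_
  have h1 : θ ((j:ℕ)+1) ≤ θ K := theta_mono hmono j.2 le_rfl
  have h2 : θ 0 ≤ θ (j:ℕ) := theta_mono hmono (Nat.zero_le _) (by omega)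
  rw [h0] at h2
  rw [hTK] at h1
  linarith

lemma exists_cells {K : ℕ} {θ : ℕ → ℝ} {T : ℝ} (hK : 1 ≤ K) (h0 : θ 0 = 0) (hTK : θ K = T)
    (hmono : ∀ j, j < K → θ j < θ (j+1)) {s t : ℝ} (hs : s ∈ Set.Icc 0 T)
    (ht : t ∈ Set.Icc 0 T) (hst : s ≤ t) :
    ∃ i j, i ≤ j ∧ i < K ∧ j < K ∧ θ i ≤ s ∧ s ≤ θ (i+1) ∧ θ j ≤ t ∧ t ≤ θ (j+1) := by
  classical
  have cell : ∀ u : ℝ, u ∈ Set.Icc 0 T →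
      Nat.findGreatest (fun i => θ i ≤ u) (K-1) < K ∧
      θ (Nat.findGreatest (fun i => θ i ≤ u) (K-1)) ≤ u ∧
      u ≤ θ (Nat.findGreatest (fun i => θ i ≤ u) (K-1) + 1) := by
    intro u hu
    set j0 := Nat.findGreatest (fun i => θ i ≤ u) (K-1) with hj0def
    have h00 : θ 0 ≤ u := by rw [h0]; exact hu.1
    have hj0 : θ j0 ≤ u := by
      have h := Nat.findGreatest_spec (P := fun i => θ i ≤ u) (Nat.zero_le (K-1)) h00
      simpa using h
    have hj0K : j0 ≤ K - 1 := Nat.findGreatest_le (P := fun i => θ i ≤ u) (K-1)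
    refine ⟨by omega, hj0, ?_⟩
    rcases Nat.lt_or_ge j0 (K-1) with h | h
    · have hng : ¬ (θ (j0+1) ≤ u) := by
        have hg := Nat.findGreatest_is_greatest (P := fun i => θ i ≤ u)
          (k := j0+1) (n := K-1) (by omega) (by omega)
        simpa using hg
      push_neg at hng
      linarith
    · have hj0eq : j0 + 1 = K := by omega
      rw [hj0eq, hTK]
      exact hu.2
  obtain ⟨hiK, hi1, hi2⟩ := cell s hs
  obtain ⟨hjK, hj1, hj2⟩ := cell t ht
  refine ⟨_, _, ?_, hiK, hjK, hi1, hi2, hj1, hj2⟩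
  exact Nat.le_findGreatest (Nat.findGreatest_le (P := fun i => θ i ≤ s) (K-1))
    (le_trans hi1 hst)

lemma node_mem {K : ℕ} {θ : ℕ → ℝ} {T : ℝ} (hK : 1 ≤ K) (h0 : θ 0 = 0) (hTK : θ K = T)
    (hmono : ∀ j, j < K → θ j < θ (j+1)) {j : ℕ} (hj : j ≤ K) :
    θ j ∈ Set.Icc (0:ℝ) T := by
  constructor
  · have := theta_mono hmono (Nat.zero_le j) hj
    rw [h0] at this; linarith
  · have := theta_mono hmono hj le_rfl
    rw [hTK] at this; linarith

end CorH

namespace CorH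

variable {Ω E : Type} [MeasurableSpace Ω] [NormedAddCommGroup E]

lemma lpHolderSemi_le_of_pairs {P : Measure Ω} {T p r : ℝ} {C : ℝ≥0∞} (X : ℝ → Ω → E)
    (hr : 0 < r)
    (h : ∀ s t : ℝ, s ∈ Set.Icc 0 T → t ∈ Set.Icc 0 T → s < t →
      eLpNorm (fun ω => X s ω - X t ω) (ENNReal.ofReal p) P
        ≤ C * ENNReal.ofReal ((t-s)^r)) :
    lpHolderSemi P T p r X ≤ C := by
  unfold lpHolderSemi
  refine iSup_le fun s => iSup_le fun t => iSup_le fun hs => iSup_le fun ht =>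
    iSup_le fun hne => ?_
  have hpos : ∀ u v : ℝ, u < v → ENNReal.ofReal ((v-u)^r) ≠ 0 := by
    intro u v huv
    simp only [ne_eq, ENNReal.ofReal_eq_zero, not_le]
    apply Real.rpow_pos_of_pos; linarith
  rcases lt_or_gt_of_ne hne with hlt | hgt
  · rw [show |s - t| = t - s by rw [abs_sub_comm]; exact abs_of_pos (by linarith)]
    exact (ENNReal.div_le_iff_le_mul (Or.inl (hpos s t hlt)) (Or.inl ENNReal.ofReal_ne_top)).2
      (h s t hs ht hlt)
  · rw [show |s - t| = s - t from abs_of_pos (by linarith)]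
    have heq : eLpNorm (fun ω => X s ω - X t ω) (ENNReal.ofReal p) P
        = eLpNorm (fun ω => X t ω - X s ω) (ENNReal.ofReal p) P := by
      rw [show (fun ω => X s ω - X t ω) = -(fun ω => X t ω - X s ω) from
        funext fun ω => (neg_sub _ _).symm, eLpNorm_neg]
    rw [heq]
    exact (ENNReal.div_le_iff_le_mul (Or.inl (hpos t s hgt)) (Or.inl ENNReal.ofReal_ne_top)).2
      (h t s ht hs hgt)

lemma eLpNorm_split {P : Measure Ω} {q : ℝ≥0∞} (hq : 1 ≤ q) {f g k : Ω → E}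
    (hf : AEStronglyMeasurable f P) (hg : AEStronglyMeasurable g P)
    (heq : ∀ ω, k ω = f ω + g ω) :
    eLpNorm k q P ≤ eLpNorm f q P + eLpNorm g q P := by
  rw [show k = f + g from funext fun ω => heq ω]
  exact eLpNorm_add_le hf hg hq

lemma eLpNorm_triple {P : Measure Ω} {q : ℝ≥0∞} (hq : 1 ≤ q) {f g h k : Ω → E}
    (hf : AEStronglyMeasurable f P) (hg : AEStronglyMeasurable g P)
    (hh : AEStronglyMeasurable h P) (heq : ∀ ω, k ω = f ω + (g ω + h ω)) :
    eLpNorm k q P ≤ eLpNorm f q P + (eLpNorm g q P + eLpNorm h q P) := by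
  rw [show k = fun ω => f ω + (g ω + h ω) from funext heq]
  refine (eLpNorm_add_le hf (hg.add hh) hq).trans ?_
  gcongr
  exact eLpNorm_add_le hg hh hq

lemma eLpNorm_flip {P : Measure Ω} {q : ℝ≥0∞} (f g : Ω → E) :
    eLpNorm (fun ω => f ω - g ω) q P = eLpNorm (fun ω => g ω - f ω) q P := by
  rw [show (fun ω => f ω - g ω) = -(fun ω => g ω - f ω) from
    funext fun ω => (neg_sub _ _).symm, eLpNorm_neg]

/-- Rate bound for the Hölder seminorm of the difference process. -/
lemma Zsemi_bound {P : Measure Ω} {T p β β' : ℝ} (hT : 0 < T) (hp : 1 < p)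
    (hβ'0 : 0 < β') (hββ' : β' ≤ β)
    {K : ℕ} {θ : ℕ → ℝ} (hK : 1 ≤ K) (h0 : θ 0 = 0) (hTK : θ K = T)
    (hm : ∀ j, j < K → θ j < θ (j+1))
    (Z : ℝ → Ω → E) (hZm : ∀ t ∈ Set.Icc (0:ℝ) T, AEStronglyMeasurable (Z t) P)
    {HZ Λ : ℝ≥0∞}
    (hpair : ∀ s t : ℝ, s ∈ Set.Icc 0 T → t ∈ Set.Icc 0 T →
      eLpNorm (fun ω => Z s ω - Z t ω) (ENNReal.ofReal p) P
        ≤ HZ * ENNReal.ofReal (|s-t|^β))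
    (hnode : ∀ j, j ≤ K → eLpNorm (Z (θ j)) (ENNReal.ofReal p) P
        ≤ Λ * ENNReal.ofReal ((dMax K θ)^β)) :
    lpHolderSemi P T p β' Z ≤ 2 * (HZ + Λ) * ENNReal.ofReal ((dMax K θ)^(β-β')) := by
  have hq1 : (1:ℝ≥0∞) ≤ ENNReal.ofReal p := by
    rw [ENNReal.one_le_ofReal]; linarith
  have hdM0 : 0 < dMax K θ := dMax_pos hK hm
  have hβ0 : 0 < β := lt_of_lt_of_le hβ'0 hββ'
  have hsup : ∀ u : ℝ, u ∈ Set.Icc 0 T →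
      eLpNorm (Z u) (ENNReal.ofReal p) P ≤ (HZ + Λ) * ENNReal.ofReal ((dMax K θ)^β) := by
    intro u hu
    obtain ⟨i, j, hij, hiK, hjK, hi1, hi2, hj1, hj2⟩ :=
      exists_cells hK h0 hTK hm hu hu le_rfl
    have hiT : θ i ∈ Set.Icc (0:ℝ) T := node_mem hK h0 hTK hm (by omega)
    have tri : eLpNorm (Z u) (ENNReal.ofReal p) P
        ≤ eLpNorm (fun ω => Z u ω - Z (θ i) ω) (ENNReal.ofReal p) P
          + eLpNorm (Z (θ i)) (ENNReal.ofReal p) P :=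
      eLpNorm_split hq1 ((hZm u hu).sub (hZm _ hiT)) (hZm _ hiT) (fun ω => by abel)
    refine tri.trans ?_
    have h1 : eLpNorm (fun ω => Z u ω - Z (θ i) ω) (ENNReal.ofReal p) P
        ≤ HZ * ENNReal.ofReal ((dMax K θ)^β) := by
      refine (hpair u (θ i) hu hiT).trans ?_
      gcongr
      rw [abs_of_nonneg (by linarith)]
      have := le_dMax θ hiK
      linarith
    have h2 := hnode i (by omega)
    calc _ ≤ HZ * ENNReal.ofReal ((dMax K θ)^β) + Λ * ENNReal.ofReal ((dMax K θ)^β) :=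
          add_le_add h1 h2
      _ = (HZ + Λ) * ENNReal.ofReal ((dMax K θ)^β) := by ring
  refine lpHolderSemi_le_of_pairs Z hβ'0 ?_
  intro s t hs ht hst
  set δ := t - s with hδ
  have hδ0 : 0 < δ := by rw [hδ]; linarith
  rcases le_or_gt δ (dMax K θ) with hcase | hcase
  · have h1 := hpair t s ht hs
    rw [show |t - s| = δ by rw [← hδ]; exact abs_of_pos hδ0] at h1
    rw [eLpNorm_flip]
    refine h1.trans ?_
    have hsplit : δ^β = δ^(β-β') * δ^β' := by
      rw [← Real.rpow_add hδ0]
      congr 1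
      ring
    rw [hsplit, ENNReal.ofReal_mul (by positivity)]
    calc HZ * (ENNReal.ofReal (δ^(β-β')) * ENNReal.ofReal (δ^β'))
        ≤ (2*(HZ+Λ)) * (ENNReal.ofReal ((dMax K θ)^(β-β')) * ENNReal.ofReal (δ^β')) := by
          refine mul_le_mul' ?_ (mul_le_mul' (ENNReal.ofReal_le_ofReal ?_) le_rfl)
          · calc HZ ≤ HZ + Λ := le_self_add
              _ ≤ 2 * (HZ + Λ) := by rw [two_mul]; exact le_self_add
          · exact Real.rpow_le_rpow hδ0.le hcase (by linarith)
      _ = 2 * (HZ + Λ) * ENNReal.ofReal ((dMax K θ)^(β-β')) * ENNReal.ofReal (δ^β') := by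
          ring
  · have tri : eLpNorm (fun ω => Z s ω - Z t ω) (ENNReal.ofReal p) P
        ≤ eLpNorm (Z s) (ENNReal.ofReal p) P + eLpNorm (Z t) (ENNReal.ofReal p) P :=
      eLpNorm_sub_le (hZm s hs) (hZm t ht) hq1
    refine tri.trans ?_
    have hsplit2 : (dMax K θ)^β = (dMax K θ)^(β-β') * (dMax K θ)^β' := by
      rw [← Real.rpow_add hdM0]
      congr 1
      ring
    calc eLpNorm (Z s) (ENNReal.ofReal p) P + eLpNorm (Z t) (ENNReal.ofReal p) P
        ≤ (HZ + Λ) * ENNReal.ofReal ((dMax K θ)^β)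
            + (HZ + Λ) * ENNReal.ofReal ((dMax K θ)^β) :=
          add_le_add (hsup s hs) (hsup t ht)
      _ = 2 * (HZ + Λ) * ENNReal.ofReal ((dMax K θ)^(β-β') * (dMax K θ)^β') := by
          rw [← hsplit2]; ring
      _ ≤ 2 * (HZ + Λ) * (ENNReal.ofReal ((dMax K θ)^(β-β')) * ENNReal.ofReal (δ^β')) := by
          rw [ENNReal.ofReal_mul (by positivity)]
          exact mul_le_mul' le_rfl (mul_le_mul' le_rfl (ENNReal.ofReal_le_ofReal
            (Real.rpow_le_rpow hdM0.le hcase.le hβ'0.le)))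
      _ = 2 * (HZ + Λ) * ENNReal.ofReal ((dMax K θ)^(β-β')) * ENNReal.ofReal (δ^β') := by
          ring

/-- Hölder bound in `L^p` for the piecewise affine interpolations (case (b)). -/
lemma caseb_bound [NormedSpace ℝ E] {P : Measure Ω} {T p β : ℝ} (hT : 0 < T) (hp : 1 < p)
    (hβ0 : 0 < β) (hβ1 : β ≤ 1)
    {K : ℕ} {θ : ℕ → ℝ} (hK : 1 ≤ K) (h0 : θ 0 = 0) (hTK : θ K = T)
    (hm : ∀ j, j < K → θ j < θ (j+1))
    {c' : ℝ} (hc'1 : 1 ≤ c') (hc' : dMax K θ ≤ c' * dMin K θ)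
    (Y0 YN : ℝ → Ω → E)
    (hY0m : ∀ t ∈ Set.Icc (0:ℝ) T, AEStronglyMeasurable (Y0 t) P)
    (hYNm : ∀ t ∈ Set.Icc (0:ℝ) T, AEStronglyMeasurable (YN t) P)
    (haff : ∀ ω, ∀ j, j < K → ∀ s ∈ Set.Icc (θ j) (θ (j+1)),
        YN s ω = ((θ (j+1) - s) / (θ (j+1) - θ j)) • YN (θ j) ω
          + ((s - θ j) / (θ (j+1) - θ j)) • YN (θ (j+1)) ω)
    {H0p Λ : ℝ≥0∞}
    (hH0pair : ∀ s t : ℝ, s ∈ Set.Icc 0 T → t ∈ Set.Icc 0 T →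
      eLpNorm (fun ω => Y0 s ω - Y0 t ω) (ENNReal.ofReal p) P
        ≤ H0p * ENNReal.ofReal (|s-t|^β))
    (hnode : ∀ j, j ≤ K → eLpNorm (fun ω => Y0 (θ j) ω - YN (θ j) ω) (ENNReal.ofReal p) P
        ≤ Λ * ENNReal.ofReal ((dMax K θ)^β)) :
    lpHolderSemi P T p β YN ≤ 3 * (H0p + 2 * (Λ * ENNReal.ofReal (c'^β))) := by
  have hq1 : (1:ℝ≥0∞) ≤ ENNReal.ofReal p := by
    rw [ENNReal.one_le_ofReal]; linarith
  have hdM0 : 0 < dMax K θ := dMax_pos hK hm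
  have hdm0 : 0 < dMin K θ := dMin_pos hK hm
  have hmem : ∀ j, j ≤ K → θ j ∈ Set.Icc (0:ℝ) T := fun j hj => node_mem hK h0 hTK hm hj
  -- node increments of YN
  have hnodesYN : ∀ i j : ℕ, i ≤ K → j ≤ K →
      eLpNorm (fun ω => YN (θ i) ω - YN (θ j) ω) (ENNReal.ofReal p) P
        ≤ 2*(Λ * ENNReal.ofReal ((dMax K θ)^β)) + H0p * ENNReal.ofReal (|θ i - θ j|^β) := by
    intro i j hi hj
    have tri := eLpNorm_triple (P := P) hq1
      (f := fun ω => YN (θ i) ω - Y0 (θ i) ω)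
      (g := fun ω => Y0 (θ i) ω - Y0 (θ j) ω)
      (h := fun ω => Y0 (θ j) ω - YN (θ j) ω)
      (k := fun ω => YN (θ i) ω - YN (θ j) ω)
      (((hYNm _ (hmem i hi))).sub (hY0m _ (hmem i hi)))
      (((hY0m _ (hmem i hi))).sub (hY0m _ (hmem j hj)))
      (((hY0m _ (hmem j hj))).sub (hYNm _ (hmem j hj)))
      (fun ω => by abel)
    refine tri.trans ?_
    have h1 : eLpNorm (fun ω => YN (θ i) ω - Y0 (θ i) ω) (ENNReal.ofReal p) P
        ≤ Λ * ENNReal.ofReal ((dMax K θ)^β) := by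
      rw [eLpNorm_flip]
      exact hnode i hi
    have h2 := hH0pair (θ i) (θ j) (hmem i hi) (hmem j hj)
    have h3 := hnode j hj
    calc _ ≤ (Λ * ENNReal.ofReal ((dMax K θ)^β))
          + (H0p * ENNReal.ofReal (|θ i - θ j|^β) + Λ * ENNReal.ofReal ((dMax K θ)^β)) :=
          add_le_add h1 (add_le_add h2 h3)
      _ = 2*(Λ * ENNReal.ofReal ((dMax K θ)^β)) + H0p * ENNReal.ofReal (|θ i - θ j|^β) := by
          ring
  -- same-cell increments
  have hsame : ∀ j, j < K → ∀ s t : ℝ, θ j ≤ s → s ≤ t → t ≤ θ (j+1) →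
      eLpNorm (fun ω => YN s ω - YN t ω) (ENNReal.ofReal p) P
        ≤ (H0p + 2 * (Λ * ENNReal.ofReal (c'^β))) * ENNReal.ofReal ((t-s)^β) := by
    intro j hj s t h1 h2 h3
    rcases eq_or_lt_of_le h2 with rfl | hst
    · rw [show (fun ω => YN s ω - YN s ω) = (fun _ : Ω => (0:E)) from
        funext fun ω => sub_self _, eLpNorm_zero']
      exact zero_le
    have hΔ : 0 < θ (j+1) - θ j := sub_pos.2 (hm j hj)
    set Δ := θ (j+1) - θ j with hΔdef
    set r := (t - s)/Δ with hrdef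
    have hr0 : 0 < r := by rw [hrdef]; exact div_pos (by linarith) hΔ
    have hr1 : r ≤ 1 := by
      rw [hrdef, div_le_one hΔ, hΔdef]
      linarith
    have hfun : (fun ω => YN s ω - YN t ω)
        = fun ω => r • (YN (θ j) ω - YN (θ (j+1)) ω) := by
      funext ω
      rw [haff ω j hj s ⟨h1, by linarith⟩, haff ω j hj t ⟨by linarith, h3⟩]
      rw [hrdef, hΔdef]
      module
    rw [hfun]
    rw [show (fun ω => r • (YN (θ j) ω - YN (θ (j+1)) ω))
      = r • (fun ω => YN (θ j) ω - YN (θ (j+1)) ω) from rfl, eLpNorm_const_smul]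
    have hnn : ((‖r‖ₑ :ℝ≥0∞)) = ENNReal.ofReal r := by
      rw [← ofReal_norm, Real.norm_eq_abs, abs_of_pos hr0]
    rw [hnn]
    have hnd := hnodesYN j (j+1) (by omega) (by omega)
    have habsΔ : |θ j - θ (j+1)| = Δ := by
      rw [abs_sub_comm]
      exact abs_of_pos hΔ
    rw [habsΔ] at hnd
    have hrβ : r ≤ r^β := by
      have := Real.rpow_le_rpow_of_exponent_ge hr0 hr1 hβ1
      rwa [Real.rpow_one] at this
    have e1 : r * Δ^β ≤ (t-s)^β := by
      calc r * Δ^β ≤ r^β * Δ^β :=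
            mul_le_mul_of_nonneg_right hrβ (Real.rpow_nonneg hΔ.le β)
        _ = (r*Δ)^β := (Real.mul_rpow hr0.le hΔ.le).symm
        _ = (t-s)^β := by rw [hrdef]; congr 1; field_simp
    have e2 : r * (dMax K θ)^β ≤ c'^β * (t-s)^β := by
      have hrdM : r * dMax K θ ≤ c' * (t-s) := by
        have hdmΔ : dMin K θ ≤ Δ := dMin_le θ hj
        have hcΔ : dMax K θ ≤ c' * Δ := le_trans hc' (by nlinarith)
        rw [hrdef, div_mul_eq_mul_div, div_le_iff₀ hΔ]
        nlinarith
      calc r * (dMax K θ)^β ≤ r^β * (dMax K θ)^β :=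
            mul_le_mul_of_nonneg_right hrβ (Real.rpow_nonneg hdM0.le β)
        _ = (r * dMax K θ)^β := (Real.mul_rpow hr0.le hdM0.le).symm
        _ ≤ (c' * (t-s))^β := Real.rpow_le_rpow (mul_nonneg hr0.le hdM0.le) hrdM hβ0.le
        _ = c'^β * (t-s)^β := Real.mul_rpow (by positivity) (by linarith)
    calc ENNReal.ofReal r * eLpNorm (fun ω => YN (θ j) ω - YN (θ (j+1)) ω)
          (ENNReal.ofReal p) P
        ≤ ENNReal.ofReal r
            * (2*(Λ * ENNReal.ofReal ((dMax K θ)^β)) + H0p * ENNReal.ofReal (Δ^β)) := by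
          gcongr
      _ = 2*Λ*(ENNReal.ofReal r * ENNReal.ofReal ((dMax K θ)^β))
            + H0p*(ENNReal.ofReal r * ENNReal.ofReal (Δ^β)) := by ring
      _ = 2*Λ*ENNReal.ofReal (r * (dMax K θ)^β) + H0p*ENNReal.ofReal (r * Δ^β) := by
          rw [← ENNReal.ofReal_mul hr0.le, ← ENNReal.ofReal_mul hr0.le]
      _ ≤ 2*Λ*ENNReal.ofReal (c'^β * (t-s)^β) + H0p*ENNReal.ofReal ((t-s)^β) := by
          gcongr
      _ = (H0p + 2 * (Λ * ENNReal.ofReal (c'^β))) * ENNReal.ofReal ((t-s)^β) := by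
          rw [ENNReal.ofReal_mul (by positivity)]
          ring
  -- main pair estimate
  refine lpHolderSemi_le_of_pairs YN hβ0 ?_
  intro s t hs ht hst
  obtain ⟨i, j, hij, hiK, hjK, hi1, hi2, hj1, hj2⟩ :=
    exists_cells hK h0 hTK hm hs ht hst.le
  have hθi1j : θ (i+1) ≤ θ j ∨ i = j := by
    rcases eq_or_lt_of_le hij with rfl | h
    · right; rfl
    · left; exact theta_mono hm h (by omega)
  rcases eq_or_lt_of_le hij with rfl | hilt
  · refine (hsame i hiK s t hi1 hst.le hj2).trans ?_
    refine mul_le_mul' ?_ le_rfl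
    nth_rewrite 1 [← one_mul (H0p + 2 * (Λ * ENNReal.ofReal (c'^β)))]
    exact mul_le_mul' (by norm_num) le_rfl
  · have hθ1j : θ (i+1) ≤ θ j := theta_mono hm hilt (by omega)
    have tri := eLpNorm_triple (P := P) hq1
      (f := fun ω => YN s ω - YN (θ (i+1)) ω)
      (g := fun ω => YN (θ (i+1)) ω - YN (θ j) ω)
      (h := fun ω => YN (θ j) ω - YN t ω)
      (k := fun ω => YN s ω - YN t ω)
      ((hYNm s hs).sub (hYNm _ (hmem (i+1) (by omega))))
      ((hYNm _ (hmem (i+1) (by omega))).sub (hYNm _ (hmem j (by omega))))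
      ((hYNm _ (hmem j (by omega))).sub (hYNm t ht))
      (fun ω => by abel)
    refine tri.trans ?_
    set L1 : ℝ≥0∞ := H0p + 2 * (Λ * ENNReal.ofReal (c'^β)) with hL1
    have hbd1 : eLpNorm (fun ω => YN s ω - YN (θ (i+1)) ω) (ENNReal.ofReal p) P
        ≤ L1 * ENNReal.ofReal ((t-s)^β) := by
      refine (hsame i hiK s (θ (i+1)) hi1 hi2 le_rfl).trans ?_
      refine mul_le_mul' le_rfl (ENNReal.ofReal_le_ofReal
        (Real.rpow_le_rpow (by linarith) (by linarith [hθ1j, hj1]) hβ0.le))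
    have hbd3 : eLpNorm (fun ω => YN (θ j) ω - YN t ω) (ENNReal.ofReal p) P
        ≤ L1 * ENNReal.ofReal ((t-s)^β) := by
      refine (hsame j hjK (θ j) t le_rfl hj1 hj2).trans ?_
      have hsj : s ≤ θ j := le_trans hi2 hθ1j
      refine mul_le_mul' le_rfl (ENNReal.ofReal_le_ofReal
        (Real.rpow_le_rpow (by linarith) (by linarith) hβ0.le))
    have hbd2 : eLpNorm (fun ω => YN (θ (i+1)) ω - YN (θ j) ω) (ENNReal.ofReal p) P
        ≤ L1 * ENNReal.ofReal ((t-s)^β) := by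
      rcases eq_or_lt_of_le (show i+1 ≤ j by omega) with heq | hlt2
      · rw [← heq]
        rw [show (fun ω => YN (θ (i+1)) ω - YN (θ (i+1)) ω) = (fun _ : Ω => (0:E)) from
          funext fun ω => sub_self _, eLpNorm_zero']
        exact zero_le
      · have hts0 : 0 < t - s := by linarith
        have hnd := hnodesYN (i+1) j (by omega) (by omega)
        refine hnd.trans ?_
        have hdMts : dMax K θ ≤ c' * (t-s) := by
          have hi1K : i+1 < K := by omega
          have hdm : dMin K θ ≤ θ (i+1+1) - θ (i+1) := dMin_le θ hi1K
          have hθle : θ (i+1+1) ≤ θ j := theta_mono hm (by omega) (by omega)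
          have h1' : θ (i+1+1) - θ (i+1) ≤ t - s := by
            have := le_trans hi2 (le_refl (θ (i+1)))
            linarith [hθle, hj1, hi2]
          calc dMax K θ ≤ c' * dMin K θ := hc'
            _ ≤ c' * (t-s) := by nlinarith
        have habs : |θ (i+1) - θ j| ≤ t - s := by
          rw [abs_sub_comm, abs_of_nonneg (by linarith)]
          linarith [hj1, hi2]
        have hterm1 : (2:ℝ≥0∞)*(Λ * ENNReal.ofReal ((dMax K θ)^β))
            ≤ 2 * (Λ * ENNReal.ofReal (c'^β)) * ENNReal.ofReal ((t-s)^β) := by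
          have : (dMax K θ)^β ≤ c'^β * (t-s)^β := by
            calc (dMax K θ)^β ≤ (c' * (t-s))^β :=
                  Real.rpow_le_rpow hdM0.le hdMts hβ0.le
              _ = c'^β * (t-s)^β := Real.mul_rpow (by positivity) (by positivity)
          calc (2:ℝ≥0∞)*(Λ * ENNReal.ofReal ((dMax K θ)^β))
              ≤ 2*(Λ * ENNReal.ofReal (c'^β * (t-s)^β)) := by gcongr
            _ = 2 * (Λ * ENNReal.ofReal (c'^β)) * ENNReal.ofReal ((t-s)^β) := by
                rw [ENNReal.ofReal_mul (by positivity)]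
                ring
        have hterm2 : H0p * ENNReal.ofReal (|θ (i+1) - θ j|^β)
            ≤ H0p * ENNReal.ofReal ((t-s)^β) :=
          mul_le_mul' le_rfl (ENNReal.ofReal_le_ofReal
            (Real.rpow_le_rpow (abs_nonneg _) habs hβ0.le))
        calc _ ≤ 2 * (Λ * ENNReal.ofReal (c'^β)) * ENNReal.ofReal ((t-s)^β)
              + H0p * ENNReal.ofReal ((t-s)^β) := add_le_add hterm1 hterm2
          _ = L1 * ENNReal.ofReal ((t-s)^β) := by rw [hL1]; ring
    calc _ ≤ L1 * ENNReal.ofReal ((t-s)^β)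
          + (L1 * ENNReal.ofReal ((t-s)^β) + L1 * ENNReal.ofReal ((t-s)^β)) :=
          add_le_add hbd1 (add_le_add hbd2 hbd3)
      _ = 3 * L1 * ENNReal.ofReal ((t-s)^β) := by ring
      _ = 3 * (H0p + 2 * (Λ * ENNReal.ofReal (c'^β))) * ENNReal.ofReal ((t-s)^β) := by
          rw [hL1]

end CorH


open CorH

/-- **Corollary 2.11** (convergence rates with respect to Hölder norms). -/
theorem cor_hoelder3
    {Ω E : Type} [MeasurableSpace Ω] [NormedAddCommGroup E] [NormedSpace ℝ E]
    [CompleteSpace E]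
    (T : ℝ) (hT : 0 < T) (p β : ℝ) (hp : 1 < p) (hβ : β ∈ Set.Ioc (1 / p) 1)
    (K : ℕ → ℕ) (θ : ℕ → ℕ → ℝ)
    (hpart : ∀ N, 1 ≤ N → 1 ≤ K N ∧ θ N 0 = 0 ∧ θ N (K N) = T ∧
        ∀ j, j < K N → θ N j < θ N (j + 1))
    (hmesh : Filter.limsup (fun N => dMax (K N) (θ N)) Filter.atTop = 0)
    (P : Measure Ω) [IsProbabilityMeasure P]
    (Y : ℕ → ℝ → Ω → E)
    (hYmeas : ∀ N, ∀ t ∈ Set.Icc (0:ℝ) T, StronglyMeasurable (Y N t))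
    (hYcont : ∀ N ω, ContinuousOn (fun t => Y N t ω) (Set.Icc (0:ℝ) T))
    (hY00 : MemLp (Y 0 0) (ENNReal.ofReal p) P)
    (hbdd :
      lpHolderSemi P T p β (Y 0)
        + (⨆ (N : ℕ) (_ : 1 ≤ N),
            ENNReal.ofReal ((dMax (K N) (θ N)) ^ (-β)) *
              ⨆ j : Fin (K N + 1),
                eLpNorm (fun ω => Y 0 (θ N j) ω - Y N (θ N j) ω)
                  (ENNReal.ofReal p) P)
        < ⊤)
    (halt :
      ((⨆ (N : ℕ) (_ : 1 ≤ N), lpHolderSemi P T p β (Y N)) < ⊤)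
      ∨
      ((∃ c : ℝ, ∀ N, 1 ≤ N → dMax (K N) (θ N) / dMin (K N) (θ N) ≤ c)
        ∧ (∀ N, 1 ≤ N → ∀ ω, ∀ j, j < K N →
            ∀ s ∈ Set.Icc (θ N j) (θ N (j + 1)),
              Y N s ω
                = ((θ N (j + 1) - s) / (θ N (j + 1) - θ N j)) • Y N (θ N j) ω
                  + ((s - θ N j) / (θ N (j + 1) - θ N j)) •
                      Y N (θ N (j + 1)) ω))) :
    ∀ α ∈ Set.Ico (0:ℝ) (β - 1 / p), ∀ ε : ℝ, 0 < ε →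
      (⨆ (N : ℕ) (_ : 1 ≤ N),
          (lpOfHolderNorm P T p α (Y N)
            + ENNReal.ofReal ((dMax (K N) (θ N)) ^ (-(β - α - 1 / p - ε))) *
                lpOfHolderNorm P T p α (fun t ω => Y 0 t ω - Y N t ω)))
        < ⊤ := by
  intro α hα ε hε
  classical
  have hp0 : (0:ℝ) < p := by linarith
  have h1p0 : (0:ℝ) < 1/p := by positivity
  have hβ1p : 1/p < β := hβ.1
  have hβ1 : β ≤ 1 := hβ.2
  have hβ0 : 0 < β := lt_trans h1p0 hβ1p
  have hα0 : 0 ≤ α := hα.1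
  have hαβ : α < β - 1/p := hα.2
  have hq1 : (1:ℝ≥0∞) ≤ ENNReal.ofReal p := by
    rw [ENNReal.one_le_ofReal]; linarith
  -- exponents
  set d : ℝ := min ε (β - 1/p - α) with hd
  have hd0 : 0 < d := lt_min hε (by linarith)
  have hdε : d ≤ ε := min_le_left _ _
  have hdβ : d ≤ β - 1/p - α := min_le_right _ _
  set α' : ℝ := α + d/2 with hα'def
  have hα'0 : 0 < α' := by rw [hα'def]; linarith
  have hαα' : α ≤ α' := by rw [hα'def]; linarith
  have hα'β : α' + 1/p < β := by rw [hα'def]; linarith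
  set ε' : ℝ := ε - d/2 with hε'def
  have hε'0 : 0 < ε' := by rw [hε'def]; linarith
  set β' : ℝ := min (α' + 1/p + ε') ((α' + 1/p + β)/2) with hβ'def
  have hβ'1 : α' + 1/p < β' := lt_min (by linarith) (by linarith)
  have hβ'β : β' ≤ β := le_trans (min_le_right _ _) (by linarith)
  have hβ'0 : 0 < β' := by linarith
  set γ : ℝ := β - α - 1/p - ε with hγdef
  have hαεα'ε' : α + ε = α' + ε' := by rw [hα'def, hε'def]; ring
  have hγβ' : γ ≤ β - β' := by
    rcases le_total (α' + 1/p + ε') ((α' + 1/p + β)/2) with h | h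
    · have hb' : β' = α' + 1/p + ε' := min_eq_left h
      rw [hγdef, hb']; linarith
    · have hb' : β' = (α' + 1/p + β)/2 := min_eq_right h
      rw [hγdef, hb']; linarith
  have hβγ : 0 ≤ β - γ := by rw [hγdef]; linarith
  have hββ'γ : 0 ≤ β - β' - γ := by linarith
  -- from hbdd
  obtain ⟨hH0top, hBtop⟩ := ENNReal.add_lt_top.1 hbdd
  -- Y0 pair bound
  have hH0pair : ∀ s t : ℝ, s ∈ Set.Icc 0 T → t ∈ Set.Icc 0 T →
      eLpNorm (fun ω => Y 0 s ω - Y 0 t ω) (ENNReal.ofReal p) P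
        ≤ lpHolderSemi P T p β (Y 0) * ENNReal.ofReal (|s-t|^β) :=
    fun s t hs ht => lpHolderSemi_pair (P := P) (T := T) (p := p) hβ0 (Y 0) hs ht
  -- measurable helper
  have hYm' : ∀ N : ℕ, ∀ t ∈ Set.Icc (0:ℝ) T, AEStronglyMeasurable (Y N t) P :=
    fun N t ht => (hYmeas N t ht).aestronglyMeasurable
  -- supremum bound at nodes
  have hBN : ∀ N, 1 ≤ N →
      ENNReal.ofReal ((dMax (K N) (θ N)) ^ (-β)) *
        (⨆ j : Fin (K N + 1),
          eLpNorm (fun ω => Y 0 (θ N j) ω - Y N (θ N j) ω) (ENNReal.ofReal p) P)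
      ≤ (⨆ (N : ℕ) (_ : 1 ≤ N),
            ENNReal.ofReal ((dMax (K N) (θ N)) ^ (-β)) *
              ⨆ j : Fin (K N + 1),
                eLpNorm (fun ω => Y 0 (θ N j) ω - Y N (θ N j) ω) (ENNReal.ofReal p) P) :=
    fun N hN => le_iSup_of_le N (le_iSup_of_le hN le_rfl)
  set B : ℝ≥0∞ := ⨆ (N : ℕ) (_ : 1 ≤ N),
      ENNReal.ofReal ((dMax (K N) (θ N)) ^ (-β)) *
        ⨆ j : Fin (K N + 1),
          eLpNorm (fun ω => Y 0 (θ N j) ω - Y N (θ N j) ω) (ENNReal.ofReal p) P with hBdef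
  have hDle : ∀ N, 1 ≤ N → ∀ j, j ≤ K N →
      eLpNorm (fun ω => Y 0 (θ N j) ω - Y N (θ N j) ω) (ENNReal.ofReal p) P
        ≤ B * ENNReal.ofReal ((dMax (K N) (θ N))^β) := by
    intro N hN j hj
    obtain ⟨hK, h0, hTK, hm⟩ := hpart N hN
    have hdM0 : 0 < dMax (K N) (θ N) := dMax_pos hK hm
    have hsup_j : eLpNorm (fun ω => Y 0 (θ N j) ω - Y N (θ N j) ω) (ENNReal.ofReal p) P
        ≤ ⨆ j : Fin (K N + 1),
            eLpNorm (fun ω => Y 0 (θ N j) ω - Y N (θ N j) ω) (ENNReal.ofReal p) P :=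
      le_iSup (fun j : Fin (K N + 1) =>
        eLpNorm (fun ω => Y 0 (θ N j) ω - Y N (θ N j) ω) (ENNReal.ofReal p) P)
        ⟨j, by omega⟩
    have hcc : ENNReal.ofReal ((dMax (K N) (θ N))^β)
        * ENNReal.ofReal ((dMax (K N) (θ N))^(-β)) = 1 := by
      rw [← ENNReal.ofReal_mul (by positivity), ← Real.rpow_add hdM0]
      simp
    calc eLpNorm (fun ω => Y 0 (θ N j) ω - Y N (θ N j) ω) (ENNReal.ofReal p) P
        ≤ ⨆ j : Fin (K N + 1),
            eLpNorm (fun ω => Y 0 (θ N j) ω - Y N (θ N j) ω) (ENNReal.ofReal p) P := hsup_j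
      _ = (ENNReal.ofReal ((dMax (K N) (θ N))^β)
            * ENNReal.ofReal ((dMax (K N) (θ N))^(-β)))
            * ⨆ j : Fin (K N + 1),
                eLpNorm (fun ω => Y 0 (θ N j) ω - Y N (θ N j) ω) (ENNReal.ofReal p) P := by
          rw [hcc, one_mul]
      _ = ENNReal.ofReal ((dMax (K N) (θ N))^β)
            * (ENNReal.ofReal ((dMax (K N) (θ N))^(-β))
              * ⨆ j : Fin (K N + 1),
                  eLpNorm (fun ω => Y 0 (θ N j) ω - Y N (θ N j) ω) (ENNReal.ofReal p) P) := by
          ring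
      _ ≤ ENNReal.ofReal ((dMax (K N) (θ N))^β) * B :=
          mul_le_mul' le_rfl (hBN N hN)
      _ = B * ENNReal.ofReal ((dMax (K N) (θ N))^β) := by ring
  -- uniform bound on the Hölder seminorms of Y N
  obtain ⟨Hbar, hHbar_ne, hHbarN⟩ : ∃ Hbar : ℝ≥0∞, Hbar ≠ ⊤ ∧
      ∀ N, 1 ≤ N → lpHolderSemi P T p β (Y N) ≤ Hbar := by
    rcases halt with hA | ⟨⟨c, hc⟩, haff⟩
    · exact ⟨_, hA.ne, fun N hN => le_iSup_of_le N (le_iSup_of_le hN le_rfl)⟩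
    · refine ⟨3 * (lpHolderSemi P T p β (Y 0)
        + 2 * (B * ENNReal.ofReal ((max c 1)^β))), ?_, ?_⟩
      · refine ENNReal.mul_ne_top (by norm_num) (ENNReal.add_ne_top.2 ⟨hH0top.ne, ?_⟩)
        exact ENNReal.mul_ne_top (by norm_num)
          (ENNReal.mul_ne_top hBtop.ne ENNReal.ofReal_ne_top)
      · intro N hN
        obtain ⟨hK, h0, hTK, hm⟩ := hpart N hN
        have hdm0 : 0 < dMin (K N) (θ N) := dMin_pos hK hm
        have hc' : dMax (K N) (θ N) ≤ (max c 1) * dMin (K N) (θ N) := by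
          have h1 := hc N hN
          rw [div_le_iff₀ hdm0] at h1
          nlinarith [le_max_left c 1, hdm0.le]
        exact caseb_bound hT hp hβ0 hβ1 hK h0 hTK hm (le_max_right c 1) hc'
          (Y 0) (Y N) (fun t ht => hYm' 0 t ht) (fun t ht => hYm' N t ht)
          (fun ω j hj s hs => haff N hN ω j hj s hs)
          hH0pair (fun j hj => hDle N hN j hj)
  -- constants
  obtain ⟨C1, hC1ne, hC1⟩ := lemA (Ω := Ω) (E := E) (P := P) hT hp hα'0 hα'β
  obtain ⟨C2, hC2ne, hC2⟩ := lemA (Ω := Ω) (E := E) (P := P) hT hp hα'0 hβ'1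
  set Ccmp : ℝ≥0∞ := 1 + ENNReal.ofReal ((max 1 T)^(α'-α)) with hCcmpdef
  have hCcmp_ne : Ccmp ≠ ⊤ :=
    ENNReal.add_ne_top.2 ⟨by norm_num, ENNReal.ofReal_ne_top⟩
  have hA0top : eLpNorm (Y 0 0) (ENNReal.ofReal p) P ≠ ⊤ := hY00.2.ne
  set Tm : ℝ := max 1 T with hTmdef
  have hTTm : T ≤ Tm := le_max_right 1 T
  set Q : ℝ≥0∞ := lpHolderSemi P T p β (Y 0) + Hbar + B with hQdef
  have hQ_ne : Q ≠ ⊤ := by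
    rw [hQdef]
    exact ENNReal.add_ne_top.2 ⟨ENNReal.add_ne_top.2 ⟨hH0top.ne, hHbar_ne⟩, hBtop.ne⟩
  set Cfin : ℝ≥0∞ := Ccmp * C1 * (eLpNorm (Y 0 0) (ENNReal.ofReal p) P
        + B * ENNReal.ofReal (T^β) + Hbar)
      + Ccmp * C2 * (B * ENNReal.ofReal (Tm^(β-γ))
        + 2 * Q * ENNReal.ofReal (Tm^(β-β'-γ))) with hCfindef
  have hCfin_ne : Cfin ≠ ⊤ := by
    rw [hCfindef]
    refine ENNReal.add_ne_top.2 ⟨?_, ?_⟩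
    · refine ENNReal.mul_ne_top (ENNReal.mul_ne_top hCcmp_ne hC1ne) ?_
      refine ENNReal.add_ne_top.2 ⟨ENNReal.add_ne_top.2 ⟨hA0top, ?_⟩, hHbar_ne⟩
      exact ENNReal.mul_ne_top hBtop.ne ENNReal.ofReal_ne_top
    · refine ENNReal.mul_ne_top (ENNReal.mul_ne_top hCcmp_ne hC2ne) ?_
      refine ENNReal.add_ne_top.2 ⟨?_, ?_⟩
      · exact ENNReal.mul_ne_top hBtop.ne ENNReal.ofReal_ne_top
      · exact ENNReal.mul_ne_top (ENNReal.mul_ne_top (by norm_num) hQ_ne)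
          ENNReal.ofReal_ne_top
  refine lt_of_le_of_lt (iSup_le fun N => iSup_le fun hN => ?_)
    (lt_top_iff_ne_top.2 hCfin_ne)
  -- per N estimate
  obtain ⟨hK, h0, hTK, hm⟩ := hpart N hN
  have hdM0 : 0 < dMax (K N) (θ N) := dMax_pos hK hm
  have hdMT : dMax (K N) (θ N) ≤ T := dMax_le_T hK h0 hTK hm
  have hdMTm : dMax (K N) (θ N) ≤ Tm := le_trans hdMT hTTm
  set Z : ℝ → Ω → E := fun t ω => Y 0 t ω - Y N t ω with hZdef
  have hZm : ∀ t ∈ Set.Icc (0:ℝ) T, StronglyMeasurable (Z t) := by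
    intro t ht
    rw [hZdef]
    exact (hYmeas 0 t ht).sub (hYmeas N t ht)
  have hZc : ∀ ω, ContinuousOn (fun t => Z t ω) (Set.Icc (0:ℝ) T) := by
    intro ω
    rw [hZdef]
    exact (hYcont 0 ω).sub (hYcont N ω)
  have hZpair : ∀ s t : ℝ, s ∈ Set.Icc 0 T → t ∈ Set.Icc 0 T →
      eLpNorm (fun ω => Z s ω - Z t ω) (ENNReal.ofReal p) P
        ≤ (lpHolderSemi P T p β (Y 0) + Hbar) * ENNReal.ofReal (|s-t|^β) := by
    intro s t hs ht
    have tri := eLpNorm_split (P := P) hq1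
      (f := fun ω => Y 0 s ω - Y 0 t ω) (g := fun ω => Y N t ω - Y N s ω)
      (k := fun ω => Z s ω - Z t ω)
      ((hYm' 0 s hs).sub (hYm' 0 t ht)) ((hYm' N t ht).sub (hYm' N s hs))
      (fun ω => by simp only [hZdef]; abel)
    refine tri.trans ?_
    have h1 := hH0pair s t hs ht
    have h2 : eLpNorm (fun ω => Y N t ω - Y N s ω) (ENNReal.ofReal p) P
        ≤ Hbar * ENNReal.ofReal (|s-t|^β) := by
      have := lpHolderSemi_pair (P := P) (T := T) (p := p) hβ0 (Y N) ht hs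
      rw [abs_sub_comm t s] at this
      exact this.trans (mul_le_mul' (hHbarN N hN) le_rfl)
    calc _ ≤ lpHolderSemi P T p β (Y 0) * ENNReal.ofReal (|s-t|^β)
          + Hbar * ENNReal.ofReal (|s-t|^β) := add_le_add h1 h2
      _ = (lpHolderSemi P T p β (Y 0) + Hbar) * ENNReal.ofReal (|s-t|^β) := by ring
  have hZnode : ∀ j, j ≤ K N → eLpNorm (Z (θ N j)) (ENNReal.ofReal p) P
      ≤ B * ENNReal.ofReal ((dMax (K N) (θ N))^β) := by
    intro j hj
    have := hDle N hN j hj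
    rw [hZdef]
    exact this
  have hZsemi : lpHolderSemi P T p β' Z
      ≤ 2 * ((lpHolderSemi P T p β (Y 0) + Hbar) + B)
        * ENNReal.ofReal ((dMax (K N) (θ N))^(β-β')) :=
    Zsemi_bound hT hp hβ'0 hβ'β hK h0 hTK hm Z
      (fun t ht => (hZm t ht).aestronglyMeasurable) hZpair hZnode
  have hZsemi' : lpHolderSemi P T p β' Z
      ≤ 2 * Q * ENNReal.ofReal ((dMax (K N) (θ N))^(β-β')) := by
    refine hZsemi.trans ?_
    rw [hQdef]
  have hZ0 : eLpNorm (Z 0) (ENNReal.ofReal p) P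
      ≤ B * ENNReal.ofReal ((dMax (K N) (θ N))^β) := by
    have h := hZnode 0 (by omega)
    rwa [h0] at h
  have hYN0 : eLpNorm (Y N 0) (ENNReal.ofReal p) P
      ≤ eLpNorm (Y 0 0) (ENNReal.ofReal p) P + B * ENNReal.ofReal (T^β) := by
    have h0T : (0:ℝ) ∈ Set.Icc (0:ℝ) T := ⟨le_rfl, hT.le⟩
    have tri := eLpNorm_split (P := P) hq1
      (f := Y 0 0) (g := fun ω => Y N 0 ω - Y 0 0 ω) (k := Y N 0)
      (hYm' 0 0 h0T) ((hYm' N 0 h0T).sub (hYm' 0 0 h0T))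
      (fun ω => by module)
    refine tri.trans ?_
    refine add_le_add le_rfl ?_
    have hflip : eLpNorm (fun ω => Y N 0 ω - Y 0 0 ω) (ENNReal.ofReal p) P
        = eLpNorm (Z 0) (ENNReal.ofReal p) P := by
      rw [eLpNorm_flip, hZdef]
    rw [hflip]
    refine hZ0.trans ?_
    exact mul_le_mul' le_rfl (ENNReal.ofReal_le_ofReal
      (Real.rpow_le_rpow hdM0.le hdMT hβ0.le))
  have hYN : lpOfHolderNorm P T p α' (Y N)
      ≤ C1 * (eLpNorm (Y 0 0) (ENNReal.ofReal p) P + B * ENNReal.ofReal (T^β) + Hbar) := by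
    refine (hC1 (Y N) (hYmeas N) (hYcont N)).trans ?_
    exact mul_le_mul' le_rfl (add_le_add hYN0 (hHbarN N hN))
  have hZhol : lpOfHolderNorm P T p α' Z
      ≤ C2 * (B * ENNReal.ofReal ((dMax (K N) (θ N))^β)
          + 2 * Q * ENNReal.ofReal ((dMax (K N) (θ N))^(β-β'))) := by
    refine (hC2 Z hZm hZc).trans ?_
    refine mul_le_mul' le_rfl (add_le_add ?_ hZsemi')
    rw [hZdef]
    exact hZ0
  have hcmp1 : lpOfHolderNorm P T p α (Y N) ≤ Ccmp * lpOfHolderNorm P T p α' (Y N) :=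
    lpOfHolderNorm_mono_exp hT hp0 hα0 hαα' (Y N)
  have hcmp2 : lpOfHolderNorm P T p α Z ≤ Ccmp * lpOfHolderNorm P T p α' Z :=
    lpOfHolderNorm_mono_exp hT hp0 hα0 hαα' Z
  have hterm1 : lpOfHolderNorm P T p α (Y N)
      ≤ Ccmp * C1 * (eLpNorm (Y 0 0) (ENNReal.ofReal p) P
          + B * ENNReal.ofReal (T^β) + Hbar) := by
    refine hcmp1.trans ?_
    calc Ccmp * lpOfHolderNorm P T p α' (Y N)
        ≤ Ccmp * (C1 * (eLpNorm (Y 0 0) (ENNReal.ofReal p) P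
            + B * ENNReal.ofReal (T^β) + Hbar)) := mul_le_mul' le_rfl hYN
      _ = Ccmp * C1 * (eLpNorm (Y 0 0) (ENNReal.ofReal p) P
            + B * ENNReal.ofReal (T^β) + Hbar) := by ring
  have hterm2 : ENNReal.ofReal ((dMax (K N) (θ N)) ^ (-γ)) * lpOfHolderNorm P T p α Z
      ≤ Ccmp * C2 * (B * ENNReal.ofReal (Tm^(β-γ))
          + 2 * Q * ENNReal.ofReal (Tm^(β-β'-γ))) := by
    calc ENNReal.ofReal ((dMax (K N) (θ N)) ^ (-γ)) * lpOfHolderNorm P T p α Z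
        ≤ ENNReal.ofReal ((dMax (K N) (θ N)) ^ (-γ))
            * (Ccmp * (C2 * (B * ENNReal.ofReal ((dMax (K N) (θ N))^β)
              + 2 * Q * ENNReal.ofReal ((dMax (K N) (θ N))^(β-β'))))) :=
          mul_le_mul' le_rfl (hcmp2.trans (mul_le_mul' le_rfl hZhol))
      _ = Ccmp * C2 * (B * (ENNReal.ofReal ((dMax (K N) (θ N)) ^ (-γ))
              * ENNReal.ofReal ((dMax (K N) (θ N))^β))
            + 2 * Q * (ENNReal.ofReal ((dMax (K N) (θ N)) ^ (-γ))
              * ENNReal.ofReal ((dMax (K N) (θ N))^(β-β')))) := by ring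
      _ ≤ Ccmp * C2 * (B * ENNReal.ofReal (Tm^(β-γ))
            + 2 * Q * ENNReal.ofReal (Tm^(β-β'-γ))) := by
          refine mul_le_mul' le_rfl (add_le_add (mul_le_mul' le_rfl ?_)
            (mul_le_mul' le_rfl ?_))
          · rw [← ENNReal.ofReal_mul (by positivity), ← Real.rpow_add hdM0]
            apply ENNReal.ofReal_le_ofReal
            rw [show -γ + β = β - γ by ring]
            exact Real.rpow_le_rpow hdM0.le hdMTm hβγ
          · rw [← ENNReal.ofReal_mul (by positivity), ← Real.rpow_add hdM0]
            apply ENNReal.ofReal_le_ofReal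
            rw [show -γ + (β - β') = β - β' - γ by ring]
            exact Real.rpow_le_rpow hdM0.le hdMTm hββ'γ
  calc lpOfHolderNorm P T p α (Y N)
        + ENNReal.ofReal ((dMax (K N) (θ N)) ^ (-γ)) * lpOfHolderNorm P T p α Z
      ≤ Cfin := by
        rw [hCfindef]
        exact add_le_add hterm1 hterm2
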